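/- arXiv:1404.6392 — 10 statements merged into one kernel-verified Lean document; each statement's English description precedes it below -/
import Mathlib

section
/- Let ℱ be a family of finite subsets of ℤⁿ, ⪰ an additive total preorder on ℤⁿ, and ℳ ⊆ ℤⁿ. If ℳ is a Markov basis of ℱ (i.e., for each F ∈ ℱ the undirected graph F_ℳ with edges {u,v} whenever u−v ∈ ±ℳ is connected), then ℳ is a ⪰-Gröbner basis of ℱ if and only if: (1) for any two ⪰-minimal elements u, v of a fiber F ∈ ℱ there is a directed path from u to v in F_{ℳ,⪰}, and (2) for any u ∈ F that is not ⪰-minimal in F there is a directed path u → u₁ → ⋯ → u_r in F_{ℳ,⪰} with u_r ≺ u. -/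
namespace Stmt1

/-- An additive (total) preorder on `ℤⁿ`: reflexive, transitive, total, and
translation invariant.  `R u v` means `u ⪰ v`. -/
def isAddPreorder {n : ℕ} (R : (Fin n → ℤ) → (Fin n → ℤ) → Prop) : Prop :=
  (∀ u, R u u) ∧ (∀ u v w, R u v → R v w → R u w) ∧
  (∀ u v, R u v ∨ R v u) ∧ (∀ u v w, R u v → R (u + w) (v + w))

/-- Directed edge of the fiber graph `F_{M,⪰}`: `u → v` iff both lie in `F`,
`v - u ∈ ±M` and `u ⪰ v`. -/
def dstep {n : ℕ} (F M : Set (Fin n → ℤ)) (R : (Fin n → ℤ) → (Fin n → ℤ) → Prop)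
    (u v : Fin n → ℤ) : Prop :=
  u ∈ F ∧ v ∈ F ∧ (v - u ∈ M ∨ u - v ∈ M) ∧ R u v

/-- Mutual reachability (strong connectivity equivalence). -/
def mutReach {n : ℕ} (F M : Set (Fin n → ℤ)) (R : (Fin n → ℤ) → (Fin n → ℤ) → Prop)
    (u v : Fin n → ℤ) : Prop :=
  Relation.ReflTransGen (dstep F M R) u v ∧ Relation.ReflTransGen (dstep F M R) v u

/-- `u` lies in a sink of the condensation `F_{M,⪰}/∼`. -/
def isSink {n : ℕ} (F M : Set (Fin n → ℤ)) (R : (Fin n → ℤ) → (Fin n → ℤ) → Prop)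
    (u : Fin n → ℤ) : Prop :=
  u ∈ F ∧ ∀ v, Relation.ReflTransGen (dstep F M R) u v →
    Relation.ReflTransGen (dstep F M R) v u

/-- Weak connectivity of the directed fiber graph. -/
def weakConn {n : ℕ} (F M : Set (Fin n → ℤ)) (R : (Fin n → ℤ) → (Fin n → ℤ) → Prop) : Prop :=
  ∀ u ∈ F, ∀ v ∈ F,
    Relation.ReflTransGen (fun a b => dstep F M R a b ∨ dstep F M R b a) u v

/-- `M` is a `⪰`-Gröbner basis of the family `Fam`. -/
def isGroebner {n : ℕ} (Fam : Set (Set (Fin n → ℤ))) (M : Set (Fin n → ℤ))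
    (R : (Fin n → ℤ) → (Fin n → ℤ) → Prop) : Prop :=
  ∀ F ∈ Fam, weakConn F M R ∧
    (∀ u v, isSink F M R u → isSink F M R v → mutReach F M R u v) ∧
    (∀ u, isSink F M R u → ∀ v ∈ F, R v u)

/-- `u` is a `⪰`-minimum of `F`. -/
def isMinimal {n : ℕ} (F : Set (Fin n → ℤ)) (R : (Fin n → ℤ) → (Fin n → ℤ) → Prop)
    (u : Fin n → ℤ) : Prop :=
  u ∈ F ∧ ∀ v ∈ F, R v u

/-- Undirected edge of the fiber graph `F_M`. -/
def mstep {n : ℕ} (F M : Set (Fin n → ℤ)) (u v : Fin n → ℤ) : Prop :=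
  u ∈ F ∧ v ∈ F ∧ (v - u ∈ M ∨ u - v ∈ M)

/-- `M` is a Markov basis of the family `Fam`: every fiber graph `F_M` is connected. -/
def isMarkov {n : ℕ} (Fam : Set (Set (Fin n → ℤ))) (M : Set (Fin n → ℤ)) : Prop :=
  ∀ F ∈ Fam, ∀ u ∈ F, ∀ v ∈ F, Relation.ReflTransGen (mstep F M) u v

variable {n : ℕ} {F M : Set (Fin n → ℤ)} {R : (Fin n → ℤ) → (Fin n → ℤ) → Prop}

lemma reach_R (hR : isAddPreorder R) {u v : Fin n → ℤ}
    (h : Relation.ReflTransGen (dstep F M R) u v) : R u v := by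
  induction h with
  | refl => exact hR.1 u
  | tail _ h2 ih => exact hR.2.1 _ _ _ ih h2.2.2.2

lemma reach_mem (hu : u ∈ F) (h : Relation.ReflTransGen (dstep F M R) u v) : v ∈ F := by
  induction h with
  | refl => exact hu
  | tail _ h2 _ => exact h2.2.1

lemma reach_rev (hR : isAddPreorder R) {u v : Fin n → ℤ}
    (h : Relation.ReflTransGen (dstep F M R) u v) (hvu : R v u) :
    Relation.ReflTransGen (dstep F M R) v u := by
  induction h with
  | refl => exact Relation.ReflTransGen.refl
  | @tail w x h1 h2 ih =>
      -- h1 : reach u w, h2 : dstep w x, hvu : R x u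
      have hRux : R u w := reach_R hR h1
      have hxw : R x w := hR.2.1 _ _ _ hvu hRux
      have hstep : dstep F M R x w := ⟨h2.2.1, h2.1, h2.2.2.1.symm, hxw⟩
      have hwu : R w u := hR.2.1 _ _ _ h2.2.2.2 hvu
      exact Relation.ReflTransGen.head hstep (ih hwu)

/-- From any element one reaches a `R`-minimal element, given condition (2). -/
lemma reach_min (hfin : F.Finite) (hR : isAddPreorder R)
    (h2 : ∀ u ∈ F, ¬ isMinimal F R u →
      ∃ w, Relation.ReflTransGen (dstep F M R) u w ∧ R u w ∧ ¬ R w u) :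
    ∀ u ∈ F, ∃ m, Relation.ReflTransGen (dstep F M R) u m ∧ isMinimal F R m := by
  set S : (Fin n → ℤ) → Set (Fin n → ℤ) := fun u => {v ∈ F | R u v ∧ ¬ R v u} with hS
  have key : ∀ k : ℕ, ∀ u ∈ F, (S u).ncard ≤ k →
      ∃ m, Relation.ReflTransGen (dstep F M R) u m ∧ isMinimal F R m := by
    intro k
    induction k with
    | zero =>
        intro u hu hcard
        by_cases hmin : isMinimal F R u
        · exact ⟨u, Relation.ReflTransGen.refl, hmin⟩
        · obtain ⟨w, hreach, huw, hwu⟩ := h2 u hu hmin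
          have hwF : w ∈ F := reach_mem hu hreach
          have : w ∈ S u := ⟨hwF, huw, hwu⟩
          have hSfin : (S u).Finite := hfin.subset (fun x hx => hx.1)
          have := ((Set.ncard_pos hSfin).mpr ⟨w, this⟩).trans_le hcard
          omega
    | succ k ih =>
        intro u hu hcard
        by_cases hmin : isMinimal F R u
        · exact ⟨u, Relation.ReflTransGen.refl, hmin⟩
        · obtain ⟨w, hreach, huw, hwu⟩ := h2 u hu hmin
          have hwF : w ∈ F := reach_mem hu hreach
          have hsub : S w ⊂ S u := by
            constructor
            · rintro x ⟨hxF, hwx, hxw⟩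
              refine ⟨hxF, hR.2.1 _ _ _ huw hwx, fun hxu => hxw (hR.2.1 _ _ _ hxu huw)⟩
            · intro hsub
              have : w ∈ S w := hsub ⟨hwF, huw, hwu⟩
              exact this.2.2 (hR.1 w)
          have hSfin : (S u).Finite := hfin.subset (fun x hx => hx.1)
          have hlt : (S w).ncard < (S u).ncard := Set.ncard_lt_ncard hsub hSfin
          obtain ⟨m, hm1, hm2⟩ := ih w hwF (by omega)
          exact ⟨m, hreach.trans hm1, hm2⟩
  intro u hu
  exact key (S u).ncard u hu le_rfl

/-- From any element one reaches a sink. -/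
lemma reach_sink (hfin : F.Finite) :
    ∀ u ∈ F, ∃ t, Relation.ReflTransGen (dstep F M R) u t ∧ isSink F M R t := by
  set S : (Fin n → ℤ) → Set (Fin n → ℤ) := fun u =>
    {v | Relation.ReflTransGen (dstep F M R) u v ∧ ¬ Relation.ReflTransGen (dstep F M R) v u}
    with hS
  have hsubF : ∀ u ∈ F, S u ⊆ F := fun u hu x hx => reach_mem hu hx.1
  have key : ∀ k : ℕ, ∀ u ∈ F, (S u).ncard ≤ k →
      ∃ t, Relation.ReflTransGen (dstep F M R) u t ∧ isSink F M R t := by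
    intro k
    induction k with
    | zero =>
        intro u hu hcard
        by_cases hsink : isSink F M R u
        · exact ⟨u, Relation.ReflTransGen.refl, hsink⟩
        · simp only [isSink, not_and, not_forall] at hsink
          obtain ⟨w, hr, hnr⟩ := hsink hu
          have : w ∈ S u := ⟨hr, hnr⟩
          have hSfin : (S u).Finite := hfin.subset (hsubF u hu)
          have := ((Set.ncard_pos hSfin).mpr ⟨w, this⟩).trans_le hcard
          omega
    | succ k ih =>
        intro u hu hcard
        by_cases hsink : isSink F M R u
        · exact ⟨u, Relation.ReflTransGen.refl, hsink⟩
        · simp only [isSink, not_and, not_forall] at hsink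
          obtain ⟨w, hr, hnr⟩ := hsink hu
          have hwF : w ∈ F := reach_mem hu hr
          have hsub : S w ⊂ S u := by
            constructor
            · rintro x ⟨hwx, hxw⟩
              exact ⟨hr.trans hwx, fun hxu => hxw (hxu.trans hr)⟩
            · intro hsub
              have : w ∈ S w := hsub ⟨hr, hnr⟩
              exact this.2 Relation.ReflTransGen.refl
          have hSfin : (S u).Finite := hfin.subset (hsubF u hu)
          have hlt : (S w).ncard < (S u).ncard := Set.ncard_lt_ncard hsub hSfin
          obtain ⟨t, ht1, ht2⟩ := ih w hwF (by omega)
          exact ⟨t, hr.trans ht1, ht2⟩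
  intro u hu
  exact key (S u).ncard u hu le_rfl


/-- Lemma 2.2: a Markov basis is a `⪰`-Gröbner basis iff (1) any two
`⪰`-minimal elements of a fiber are joined by a directed path, and (2) from any
non-minimal element there is a directed path reaching a strictly smaller element. -/
theorem stmt_1 (n : ℕ) (Fam : Set (Set (Fin n → ℤ))) (hfin : ∀ F ∈ Fam, F.Finite)
    (R : (Fin n → ℤ) → (Fin n → ℤ) → Prop) (hR : isAddPreorder R)
    (M : Set (Fin n → ℤ)) (hM : isMarkov Fam M) :
    isGroebner Fam M R ↔
      ((∀ F ∈ Fam, ∀ u v, isMinimal F R u → isMinimal F R v →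
          Relation.ReflTransGen (dstep F M R) u v) ∧
       (∀ F ∈ Fam, ∀ u ∈ F, ¬ isMinimal F R u →
          ∃ w, Relation.ReflTransGen (dstep F M R) u w ∧ R u w ∧ ¬ R w u)) := by
  constructor
  · intro hG
    constructor
    · intro F hF u v hu hv
      obtain ⟨_, hsinks, hsinkmin⟩ := hG F hF
      obtain ⟨t, hut, htsink⟩ := reach_sink (hfin F hF) u hu.1
      obtain ⟨s, hvs, hssink⟩ := reach_sink (hfin F hF) v hv.1
      -- t, s are minima; u, v minimal ⇒ everything R-equivalent
      have htu : R t u := hu.2 t htsink.1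
      have hsv : R s v := hv.2 s hssink.1
      have hsv' : Relation.ReflTransGen (dstep F M R) s v := reach_rev hR hvs hsv
      have hts : Relation.ReflTransGen (dstep F M R) t s := (hsinks t s htsink hssink).1
      exact (hut.trans hts).trans hsv'
    · intro F hF u hu hnmin
      obtain ⟨_, hsinks, hsinkmin⟩ := hG F hF
      obtain ⟨t, hut, htsink⟩ := reach_sink (hfin F hF) u hu
      simp only [isMinimal, not_and, not_forall] at hnmin
      obtain ⟨v, hvF, hnvu⟩ := hnmin hu
      have hntu : ¬ R t u := fun htu => hnvu (hR.2.1 _ _ _ (hsinkmin t htsink v hvF) htu)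
      have hut' : R u t := (hR.2.2.1 u t).resolve_right hntu
      exact ⟨t, hut, hut', hntu⟩
  · rintro ⟨h1, h2⟩ F hF
    have hFfin := hfin F hF
    -- every sink is a minimum
    have hsinkmin : ∀ u, isSink F M R u → ∀ v ∈ F, R v u := by
      intro u husink v hvF
      obtain ⟨m, hum, hmmin⟩ := reach_min hFfin hR (h2 F hF) u husink.1
      have hmu : R m u := reach_R hR (husink.2 m hum)
      exact hR.2.1 _ _ _ (hmmin.2 v hvF) hmu
    refine ⟨?_, ?_, hsinkmin⟩
    · intro u hu v hv
      refine Relation.ReflTransGen.mono ?_ u v (hM F hF u hu v hv)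
      rintro a b ⟨haF, hbF, hd⟩
      rcases hR.2.2.1 a b with hab | hba
      · exact Or.inl ⟨haF, hbF, hd, hab⟩
      · exact Or.inr ⟨hbF, haF, hd.symm, hba⟩
    · intro u v husink hvsink
      have humin : isMinimal F R u := ⟨husink.1, hsinkmin u husink⟩
      have hvmin : isMinimal F R v := ⟨hvsink.1, hsinkmin v hvsink⟩
      exact ⟨h1 F hF u v humin hvmin, h1 F hF v u hvmin humin⟩

end Stmt1
end

section
/- Let D ∈ ℤ^{r×n}, ℒ ⊆ ℤⁿ a lattice with lattice basis given by the columns of an integer matrix L of size n×t, and assume that D̃ = DL ∈ ℤ^{r×t} has rank t. If 𝒢 ⊆ ℒ is an (ℒ, D)-Markov basis (a set of moves connecting every set {u ∈ ℒ + v : Du ≥ c} for all c ∈ ℤʳ, v ∈ ℤⁿ), then D(𝒢) ⊆ ℤʳ is a Markov basis of the lattice ℤD̃ spanned by the columns of D̃ (i.e., it connects every set {w ∈ ℕʳ : w ∈ ℤD̃ + b} for b ∈ ℤʳ). -/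
namespace Stmt3

/-- Undirected move step within a fiber `F` using moves from `±M`. -/
def mstep {ι : Type*} (F M : Set (ι → ℤ)) (u v : ι → ℤ) : Prop :=
  u ∈ F ∧ v ∈ F ∧ (v - u ∈ M ∨ u - v ∈ M)

/-- `M` connects the set `F`. -/
def connects {ι : Type*} (M F : Set (ι → ℤ)) : Prop :=
  ∀ u ∈ F, ∀ v ∈ F, Relation.ReflTransGen (mstep F M) u v

/-- The inequality fiber `{u ∈ ℒ + v : D u ≥ c}`. -/
def ineqFiber {r n : ℕ} (D : Matrix (Fin r) (Fin n) ℤ) (L : Set (Fin n → ℤ))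
    (v : Fin n → ℤ) (c : Fin r → ℤ) : Set (Fin n → ℤ) :=
  {u | u - v ∈ L ∧ c ≤ D.mulVec u}

/-- `G` is an `(ℒ,D)`-Markov basis: it connects all inequality fibers. -/
def isIneqMarkov {r n : ℕ} (D : Matrix (Fin r) (Fin n) ℤ) (L : Set (Fin n → ℤ))
    (G : Set (Fin n → ℤ)) : Prop :=
  ∀ (c : Fin r → ℤ) (v : Fin n → ℤ), connects G (ineqFiber D L v c)

/-- The lattice fiber `{w ∈ ℕʳ : w - b ∈ Lat}`. -/
def latFiber {r : ℕ} (Lat : Set (Fin r → ℤ)) (b : Fin r → ℤ) : Set (Fin r → ℤ) :=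
  {w | 0 ≤ w ∧ w - b ∈ Lat}

/-- `G` is a Markov basis of the lattice `Lat ⊆ ℤʳ`. -/
def isLatMarkov {r : ℕ} (Lat : Set (Fin r → ℤ)) (G : Set (Fin r → ℤ)) : Prop :=
  ∀ b : Fin r → ℤ, connects G (latFiber Lat b)

/-- Lemma 2.6(1): if `𝒢` is an `(ℒ,D)`-Markov basis, where `ℒ` is the
lattice spanned by the columns of `L` and `D̃ = D L` has rank `t`, then `D(𝒢)` is a
Markov basis of the lattice `ℤD̃` spanned by the columns of `D̃`. -/
theorem stmt_3 (r n t : ℕ) (D : Matrix (Fin r) (Fin n) ℤ) (L : Matrix (Fin n) (Fin t) ℤ)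
    (hrank : (D * L).rank = t)
    (G : Set (Fin n → ℤ)) (hG : G ⊆ Set.range L.mulVec)
    (hMB : isIneqMarkov D (Set.range L.mulVec) G) :
    isLatMarkov (Set.range (D * L).mulVec) (D.mulVec '' G) := by
  intro b u hu v hv
  obtain ⟨hu0, x, hx⟩ := hu
  obtain ⟨hv0, y, hy⟩ := hv
  -- the auxiliary inequality fiber
  set F : Set (Fin n → ℤ) := ineqFiber D (Set.range L.mulVec) 0 (-b) with hF
  -- the map φ
  set φ : (Fin n → ℤ) → (Fin r → ℤ) := fun w => D.mulVec w + b with hφ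
  have hmem : ∀ w ∈ F, φ w ∈ latFiber (Set.range (D * L).mulVec) b := by
    rintro w ⟨⟨z, hz⟩, hw⟩
    constructor
    · intro i
      have h : -b i ≤ D.mulVec w i := hw i
      simp only [hφ, Pi.add_apply, Pi.zero_apply]
      linarith
    · refine ⟨z, ?_⟩
      have : L.mulVec z = w := by simpa using hz
      simp [hφ, ← this, ← Matrix.mulVec_mulVec]
  have hLx : L.mulVec x ∈ F := by
    refine ⟨⟨x, by simp⟩, ?_⟩
    have : D.mulVec (L.mulVec x) = u - b := by rw [Matrix.mulVec_mulVec, hx]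
    rw [this]
    intro i
    simpa [sub_eq_add_neg, add_comm] using add_le_add_right (hu0 i) (-b i)
  have hLy : L.mulVec y ∈ F := by
    refine ⟨⟨y, by simp⟩, ?_⟩
    have : D.mulVec (L.mulVec y) = v - b := by rw [Matrix.mulVec_mulVec, hy]
    rw [this]
    intro i
    simpa [sub_eq_add_neg, add_comm] using add_le_add_right (hv0 i) (-b i)
  have key := hMB (-b) 0 (L.mulVec x) hLx (L.mulVec y) hLy
  have lift : Relation.ReflTransGen (mstep (latFiber (Set.range (D * L).mulVec) b)
      (D.mulVec '' G)) (φ (L.mulVec x)) (φ (L.mulVec y)) := by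
    refine Relation.ReflTransGen.lift φ ?_ _ _ key
    rintro a c ⟨ha, hc, hmove⟩
    refine ⟨hmem a ha, hmem c hc, ?_⟩
    have hsub : ∀ p q : Fin n → ℤ, φ p - φ q = D.mulVec (p - q) := by
      intro p q
      simp [hφ, Matrix.mulVec_sub]
    rcases hmove with h | h
    · exact Or.inl ⟨c - a, h, (hsub c a).symm⟩
    · exact Or.inr ⟨a - c, h, (hsub a c).symm⟩
  have hxu : φ (L.mulVec x) = u := by
    simp [hφ, Matrix.mulVec_mulVec, hx]
  have hyv : φ (L.mulVec y) = v := by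
    simp [hφ, Matrix.mulVec_mulVec, hy]
  rwa [hxu, hyv] at lift

end Stmt3
end

section
/- Let D ∈ ℤ^{r×n}, ℒ ⊆ ℤⁿ a lattice with basis the columns of L ∈ ℤ^{n×t}, and suppose D̃ = DL has rank t. If 𝒢' is a Markov basis of the lattice ℤD̃ ⊆ ℤʳ, then the set D⁻¹(𝒢') ∩ ℒ = {m ∈ ℒ : Dm ∈ 𝒢'} is an (ℒ, D)-Markov basis. -/
namespace Stmt4

/-- Undirected move step within a fiber `F` using moves from `±M`. -/
def mstep {ι : Type*} (F M : Set (ι → ℤ)) (u v : ι → ℤ) : Prop :=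
  u ∈ F ∧ v ∈ F ∧ (v - u ∈ M ∨ u - v ∈ M)

/-- `M` connects the set `F`. -/
def connects {ι : Type*} (M F : Set (ι → ℤ)) : Prop :=
  ∀ u ∈ F, ∀ v ∈ F, Relation.ReflTransGen (mstep F M) u v

/-- The inequality fiber `{u ∈ ℒ + v : D u ≥ c}`. -/
def ineqFiber {r n : ℕ} (D : Matrix (Fin r) (Fin n) ℤ) (L : Set (Fin n → ℤ))
    (v : Fin n → ℤ) (c : Fin r → ℤ) : Set (Fin n → ℤ) :=
  {u | u - v ∈ L ∧ c ≤ D.mulVec u}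

/-- `G` is an `(ℒ,D)`-Markov basis: it connects all inequality fibers. -/
def isIneqMarkov {r n : ℕ} (D : Matrix (Fin r) (Fin n) ℤ) (L : Set (Fin n → ℤ))
    (G : Set (Fin n → ℤ)) : Prop :=
  ∀ (c : Fin r → ℤ) (v : Fin n → ℤ), connects G (ineqFiber D L v c)

/-- The lattice fiber `{w ∈ ℕʳ : w - b ∈ Lat}`. -/
def latFiber {r : ℕ} (Lat : Set (Fin r → ℤ)) (b : Fin r → ℤ) : Set (Fin r → ℤ) :=
  {w | 0 ≤ w ∧ w - b ∈ Lat}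

/-- `G` is a Markov basis of the lattice `Lat ⊆ ℤʳ`. -/
def isLatMarkov {r : ℕ} (Lat : Set (Fin r → ℤ)) (G : Set (Fin r → ℤ)) : Prop :=
  ∀ b : Fin r → ℤ, connects G (latFiber Lat b)


lemma inj_of_rank {r t : ℕ} (A : Matrix (Fin r) (Fin t) ℤ) (h : A.rank = t) :
    Function.Injective A.mulVec := by
  suffices hker : LinearMap.ker A.mulVecLin = ⊥ by
    have hi := LinearMap.ker_eq_bot.mp hker
    exact fun a b hab => hi hab
  have h1 := A.mulVecLin.rank_range_add_rank_ker
  have h2 : Module.rank ℤ (LinearMap.range A.mulVecLin) = t := by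
    rw [← Module.finrank_eq_rank]
    exact_mod_cast congrArg Nat.cast h
  rw [h2, rank_fin_fun] at h1
  have h3 : Module.rank ℤ (LinearMap.ker A.mulVecLin) = 0 :=
    Cardinal.eq_of_add_eq_add_left (by rw [h1, add_zero]) (Cardinal.nat_lt_aleph0 t)
  exact Submodule.rank_eq_zero.mp h3


/-- Lemma 2.6(2): if `𝒢'` is a Markov basis of the lattice `ℤD̃`
(`D̃ = D L` of rank `t`), then `D⁻¹(𝒢') ∩ ℒ = {m ∈ ℒ : D m ∈ 𝒢'}` is an
`(ℒ,D)`-Markov basis, where `ℒ` is the lattice spanned by the columns of `L`. -/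
theorem stmt_4 (r n t : ℕ) (D : Matrix (Fin r) (Fin n) ℤ) (L : Matrix (Fin n) (Fin t) ℤ)
    (hrank : (D * L).rank = t)
    (G' : Set (Fin r → ℤ)) (hG' : G' ⊆ Set.range (D * L).mulVec)
    (hMB : isLatMarkov (Set.range (D * L).mulVec) G') :
    isIneqMarkov D (Set.range L.mulVec)
      {m | m ∈ Set.range L.mulVec ∧ D.mulVec m ∈ G'} := by
  set G : Set (Fin n → ℤ) := {m | m ∈ Set.range L.mulVec ∧ D.mulVec m ∈ G'} with hGdef
  have hinj := inj_of_rank (D * L) hrank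
  -- D kills a lattice element only if it is zero
  have hL0 : ∀ x : Fin t → ℤ, D.mulVec (L.mulVec x) = 0 → L.mulVec x = 0 := by
    intro x hx
    rw [Matrix.mulVec_mulVec] at hx
    have : x = 0 := hinj (by simpa using hx)
    simp [this]
  intro c v
  set F := ineqFiber D (Set.range L.mulVec) v c with hFdef
  set b : Fin r → ℤ := D.mulVec v - c with hbdef
  set B := Set.range (D * L).mulVec with hBdef
  -- forward map into the lattice fiber
  have hfwd : ∀ z ∈ F, D.mulVec z - c ∈ latFiber B b := by
    rintro z ⟨⟨x, hx⟩, hz2⟩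
    constructor
    · intro i; simpa using sub_nonneg.mpr (hz2 i)
    · refine ⟨x, ?_⟩
      have : D.mulVec z - c - b = D.mulVec (z - v) := by
        rw [Matrix.mulVec_sub, hbdef]; abel
      rw [this, ← hx, Matrix.mulVec_mulVec]
  -- lifting of paths
  have key : ∀ w' : Fin r → ℤ, ∀ u ∈ F,
      Relation.ReflTransGen (mstep (latFiber B b) G') (D.mulVec u - c) w' →
      ∃ z ∈ F, D.mulVec z - c = w' ∧ Relation.ReflTransGen (mstep F G) u z := by
    intro w' u hu hpath
    induction hpath with
    | refl => exact ⟨u, hu, rfl, Relation.ReflTransGen.refl⟩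
    | @tail w1 w2 hab hbc ih =>
      obtain ⟨z, hz, hzw, hpz⟩ := ih
      obtain ⟨hw1, hw2, hmove⟩ := hbc
      obtain ⟨y, hy⟩ := hz.1
      have hDz : D.mulVec z = w1 + c := by
        rw [← hzw]; abel
      rcases hmove with h | h
      · -- w2 - w1 ∈ G', move forward
        obtain ⟨x, hx⟩ := hG' h
        set m := L.mulVec x with hm
        have hDm : D.mulVec m = w2 - w1 := by
          rw [hm, Matrix.mulVec_mulVec, hx]
        have hz2F : z + m ∈ F := by
          refine ⟨⟨y + x, ?_⟩, ?_⟩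
          · rw [Matrix.mulVec_add, hy, hm]; abel
          · have : D.mulVec (z + m) = w2 + c := by
              rw [Matrix.mulVec_add, hDz, hDm]; abel
            rw [this]
            intro i
            simpa using hw2.1 i
        have hmG : m ∈ G := ⟨⟨x, hm.symm⟩, by rw [hDm]; exact h⟩
        refine ⟨z + m, hz2F, ?_, hpz.tail ⟨hz, hz2F, Or.inl (by simpa using hmG)⟩⟩
        rw [Matrix.mulVec_add, hDz, hDm]; abel
      · -- w1 - w2 ∈ G', move backward
        obtain ⟨x, hx⟩ := hG' h
        set m := L.mulVec x with hm
        have hDm : D.mulVec m = w1 - w2 := by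
          rw [hm, Matrix.mulVec_mulVec, hx]
        have hz2F : z - m ∈ F := by
          refine ⟨⟨y - x, ?_⟩, ?_⟩
          · rw [Matrix.mulVec_sub, hy, hm]; abel
          · have : D.mulVec (z - m) = w2 + c := by
              rw [Matrix.mulVec_sub, hDz, hDm]; abel
            rw [this]
            intro i
            simpa using hw2.1 i
        have hmG : m ∈ G := ⟨⟨x, hm.symm⟩, by rw [hDm]; exact h⟩
        refine ⟨z - m, hz2F, ?_, hpz.tail ⟨hz, hz2F, Or.inr (by simpa using hmG)⟩⟩
        rw [Matrix.mulVec_sub, hDz, hDm]; abel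
  -- conclude
  intro u hu u' hu'
  obtain ⟨z, hz, hzw, hpz⟩ := key (D.mulVec u' - c) u hu
    (hMB b _ (hfwd u hu) _ (hfwd u' hu'))
  obtain ⟨y, hy⟩ := hz.1
  obtain ⟨y', hy'⟩ := hu'.1
  have hdiff : z - u' = L.mulVec (y - y') := by
    rw [Matrix.mulVec_sub, hy, hy']; abel
  have hDzu : D.mulVec (z - u') = 0 := by
    rw [Matrix.mulVec_sub]
    have : D.mulVec z = D.mulVec u' := by
      have h1 : D.mulVec z - c + c = D.mulVec u' - c + c := by rw [hzw]
      simpa using h1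
    rw [this, sub_self]
  have : z - u' = 0 := by
    rw [hdiff] at hDzu ⊢
    exact hL0 _ hDzu
  have hzu : z = u' := by
    have := sub_eq_zero.mp this
    exact this
  rwa [hzu] at hpz

end Stmt4
end

section
/- Let ℒ ⊆ ℤⁿ be a lattice and ⪰ an additive preorder on ℤⁿ. If 𝒢 ⊆ ℒ is a ⪰-Gröbner basis of ℒ and v, v₁, v₂ ∈ 𝒢 ∖ {0} satisfy v = v₁ + v₂ with v₁ and v₂ sign-consistent (v₁ᵢ·v₂ᵢ ≥ 0 for all i), then 𝒢 ∖ {v} is also a ⪰-Gröbner basis of ℒ. -/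
namespace Stmt5

def isAddPreorder {n : ℕ} (R : (Fin n → ℤ) → (Fin n → ℤ) → Prop) : Prop :=
  (∀ u, R u u) ∧ (∀ u v w, R u v → R v w → R u w) ∧
  (∀ u v, R u v ∨ R v u) ∧ (∀ u v w, R u v → R (u + w) (v + w))

def dstep {n : ℕ} (F M : Set (Fin n → ℤ)) (R : (Fin n → ℤ) → (Fin n → ℤ) → Prop)
    (u v : Fin n → ℤ) : Prop :=
  u ∈ F ∧ v ∈ F ∧ (v - u ∈ M ∨ u - v ∈ M) ∧ R u v

def mutReach {n : ℕ} (F M : Set (Fin n → ℤ)) (R : (Fin n → ℤ) → (Fin n → ℤ) → Prop)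
    (u v : Fin n → ℤ) : Prop :=
  Relation.ReflTransGen (dstep F M R) u v ∧ Relation.ReflTransGen (dstep F M R) v u

def isSink {n : ℕ} (F M : Set (Fin n → ℤ)) (R : (Fin n → ℤ) → (Fin n → ℤ) → Prop)
    (u : Fin n → ℤ) : Prop :=
  u ∈ F ∧ ∀ v, Relation.ReflTransGen (dstep F M R) u v →
    Relation.ReflTransGen (dstep F M R) v u

def weakConn {n : ℕ} (F M : Set (Fin n → ℤ)) (R : (Fin n → ℤ) → (Fin n → ℤ) → Prop) : Prop :=
  ∀ u ∈ F, ∀ v ∈ F,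
    Relation.ReflTransGen (fun a b => dstep F M R a b ∨ dstep F M R b a) u v

def isGroebner {n : ℕ} (Fam : Set (Set (Fin n → ℤ))) (M : Set (Fin n → ℤ))
    (R : (Fin n → ℤ) → (Fin n → ℤ) → Prop) : Prop :=
  ∀ F ∈ Fam, weakConn F M R ∧
    (∀ u v, isSink F M R u → isSink F M R v → mutReach F M R u v) ∧
    (∀ u, isSink F M R u → ∀ v ∈ F, R v u)

/-- The family of all fibers `F^lat(ℒ,u) = {w ∈ ℕⁿ : w - u ∈ ℒ}` of a lattice `ℒ`. -/
def latFam {n : ℕ} (L : AddSubgroup (Fin n → ℤ)) : Set (Set (Fin n → ℤ)) :=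
  {F | ∃ u : Fin n → ℤ, F = {w | 0 ≤ w ∧ w - u ∈ L}}

/-- Lemma 2.8: if `v ∈ 𝒢` decomposes as a sign-consistent sum of two
other nonzero elements of `𝒢`, then `𝒢 \ {v}` is still a `⪰`-Gröbner basis. -/
theorem stmt_5 (n : ℕ) (L : AddSubgroup (Fin n → ℤ))
    (R : (Fin n → ℤ) → (Fin n → ℤ) → Prop) (hR : isAddPreorder R)
    (G : Set (Fin n → ℤ)) (hGL : ∀ g ∈ G, g ∈ L)
    (hGB : isGroebner (latFam L) G R)
    (v v₁ v₂ : Fin n → ℤ) (hv : v ∈ G) (hv₁ : v₁ ∈ G) (hv₂ : v₂ ∈ G)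
    (hv0 : v ≠ 0) (hv₁0 : v₁ ≠ 0) (hv₂0 : v₂ ≠ 0)
    (hsum : v = v₁ + v₂) (hsc : ∀ i, 0 ≤ v₁ i * v₂ i) :
    isGroebner (latFam L) (G \ {v}) R := by
  obtain ⟨hrefl, htrans, htotal, hadd⟩ := hR
  have htr : ∀ z a b : Fin n → ℤ, R a b → R (z + a) (z + b) := by
    intro z a b h
    have h2 := hadd a b z h
    rwa [add_comm a z, add_comm b z] at h2
  have hrev : ∀ z a b : Fin n → ℤ, R (z + a) (z + b) → R a b := by
    intro z a b h
    have h2 := hadd (z + a) (z + b) (-z) h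
    have e1 : z + a + -z = a := by abel
    have e2 : z + b + -z = b := by abel
    rwa [e1, e2] at h2
  have hne₁ : v₁ ≠ v := by
    intro h
    apply hv₂0
    have e : v₂ = v - v₁ := by rw [hsum]; abel
    rw [e, h, sub_self]
  have hne₂ : v₂ ≠ v := by
    intro h
    apply hv₁0
    have e : v₁ = v - v₂ := by rw [hsum]; abel
    rw [e, h, sub_self]
  have hv₁G' : v₁ ∈ G \ {v} := ⟨hv₁, by simpa using hne₁⟩
  have hv₂G' : v₂ ∈ G \ {v} := ⟨hv₂, by simpa using hne₂⟩
  have hv₁L := hGL v₁ hv₁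
  have hv₂L := hGL v₂ hv₂
  have hsum' : v = v₂ + v₁ := by rw [hsum, add_comm]
  have hscsym : ∀ i, 0 ≤ v₂ i * v₁ i := fun i => by rw [mul_comm]; exact hsc i
  intro F hF
  obtain ⟨hconn, hsinkmut, hsinkmax⟩ := hGB F hF
  obtain ⟨u₀, hFeq⟩ := hF
  have memF : ∀ a : Fin n → ℤ, a ∈ F ↔ 0 ≤ a ∧ a - u₀ ∈ L := by
    intro a; rw [hFeq]; exact Iff.rfl
  have fibadd : ∀ (a w₁ w₂ : Fin n → ℤ), w₁ ∈ L → (∀ i, 0 ≤ w₁ i * w₂ i) →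
      a ∈ F → a + (w₁ + w₂) ∈ F → a + w₁ ∈ F := by
    intro a w₁ w₂ hw₁L hsc' haF habF
    rw [memF] at haF habF ⊢
    obtain ⟨ha0, haL⟩ := haF
    obtain ⟨hab0, -⟩ := habF
    rw [Pi.le_def] at ha0 hab0
    constructor
    · rw [Pi.le_def]
      intro i
      have h1 := ha0 i
      have h2 := hab0 i
      simp only [Pi.zero_apply, Pi.add_apply] at h1 h2 ⊢
      rcases le_or_gt 0 (w₁ i) with h | h
      · linarith
      · have hw2 : w₂ i ≤ 0 := by nlinarith [hsc' i]
        linarith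
    · rw [show a + w₁ - u₀ = a - u₀ + w₁ from by abel]
      exact add_mem haL hw₁L
  have monoR : ∀ {a b : Fin n → ℤ},
      Relation.ReflTransGen (dstep F (G \ {v}) R) a b → R a b := by
    intro a b h
    induction h with
    | refl => exact hrefl a
    | tail _ h2 ih => exact htrans _ _ _ ih h2.2.2.2
  have monoRTG : ∀ {a b : Fin n → ℤ},
      Relation.ReflTransGen (dstep F (G \ {v}) R) a b →
      Relation.ReflTransGen (dstep F G R) a b := by
    intro a b h
    exact Relation.ReflTransGen.mono
      (fun x y (hs : dstep F (G \ {v}) R x y) => (⟨hs.1, hs.2.1, hs.2.2.1.imp (fun t => t.1) (fun t => t.1), hs.2.2.2⟩ : dstep F G R x y)) a b h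
  have step_up : ∀ (w₁ w₂ : Fin n → ℤ), w₁ ∈ G \ {v} → w₂ ∈ G \ {v} → w₁ ∈ L → w₂ ∈ L →
      v = w₁ + w₂ → (∀ i, 0 ≤ w₁ i * w₂ i) →
      ∀ u z, isSink F (G \ {v}) R u → Relation.ReflTransGen (dstep F (G \ {v}) R) u z →
      z ∈ F → z + v ∈ F → R 0 w₂ → R z (z + v) →
      Relation.ReflTransGen (dstep F (G \ {v}) R) u (z + v) := by
    intro w₁ w₂ hw₁G hw₂G hw₁L hw₂L hsv hsc' u z hu huz hzF hzvF h02 hr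
    have hsc'' : ∀ i, 0 ≤ w₂ i * w₁ i := fun i => by rw [mul_comm]; exact hsc' i
    have hcF : z + w₂ ∈ F := fibadd z w₂ w₁ hw₂L hsc'' hzF
      (by rw [show z + (w₂ + w₁) = z + v from by rw [hsv]; abel]; exact hzvF)
    have step1 : dstep F (G \ {v}) R z (z + w₂) :=
      ⟨hzF, hcF, Or.inl (by rw [add_sub_cancel_left]; exact hw₂G),
        by have h2 := htr z 0 w₂ h02; rwa [add_zero] at h2⟩
    have hback : R (z + w₂) z := htrans _ _ _ (monoR (hu.2 _ (huz.tail step1))) (monoR huz)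
    have h20 : R w₂ 0 := hrev z w₂ 0 (by rw [add_zero]; exact hback)
    have h0v : R 0 v := hrev z 0 v (by rw [add_zero]; exact hr)
    have h01 : R 0 w₁ := htrans _ _ _ h0v
      (by have h2 := htr w₁ w₂ 0 h20; rwa [← hsv, add_zero] at h2)
    have hdF : z + w₁ ∈ F := fibadd z w₁ w₂ hw₁L hsc' hzF (by rw [← hsv]; exact hzvF)
    have step2 : dstep F (G \ {v}) R z (z + w₁) :=
      ⟨hzF, hdF, Or.inl (by rw [add_sub_cancel_left]; exact hw₁G),
        by have h2 := htr z 0 w₁ h01; rwa [add_zero] at h2⟩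
    have step3 : dstep F (G \ {v}) R (z + w₁) (z + v) :=
      ⟨hdF, hzvF, Or.inl (by rw [show z + v - (z + w₁) = w₂ from by rw [hsv]; abel]; exact hw₂G),
        by have h2 := htr (z + w₁) 0 w₂ h02
           rwa [add_zero, show z + w₁ + w₂ = z + v from by rw [hsv]; abel] at h2⟩
    exact (huz.tail step2).tail step3
  have step_down : ∀ (w₁ w₂ : Fin n → ℤ), w₁ ∈ G \ {v} → w₂ ∈ G \ {v} → w₁ ∈ L → w₂ ∈ L →
      v = w₁ + w₂ → (∀ i, 0 ≤ w₁ i * w₂ i) →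
      ∀ u z, isSink F (G \ {v}) R u → Relation.ReflTransGen (dstep F (G \ {v}) R) u z →
      z ∈ F → z - v ∈ F → R w₂ 0 → R z (z - v) →
      Relation.ReflTransGen (dstep F (G \ {v}) R) u (z - v) := by
    intro w₁ w₂ hw₁G hw₂G hw₁L hw₂L hsv hsc' u z hu huz hzF hzvF h20 hr
    have hsc'' : ∀ i, 0 ≤ w₂ i * w₁ i := fun i => by rw [mul_comm]; exact hsc' i
    have hcF : z - w₂ ∈ F := by
      have h2 := fibadd (z - v) w₁ w₂ hw₁L hsc' hzvF
        (by rw [show z - v + (w₁ + w₂) = z from by rw [hsv]; abel]; exact hzF)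
      rwa [show z - v + w₁ = z - w₂ from by rw [hsv]; abel] at h2
    have step1 : dstep F (G \ {v}) R z (z - w₂) :=
      ⟨hzF, hcF, Or.inr (by rw [sub_sub_cancel]; exact hw₂G),
        by have h2 := htr (z - w₂) w₂ 0 h20
           rwa [add_zero, show z - w₂ + w₂ = z from by abel] at h2⟩
    have hback : R (z - w₂) z := htrans _ _ _ (monoR (hu.2 _ (huz.tail step1))) (monoR huz)
    have h02 : R 0 w₂ := hrev (z - w₂) 0 w₂
      (by rw [add_zero, show z - w₂ + w₂ = z from by abel]; exact hback)
    have hv0' : R v 0 := hrev (z - v) v 0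
      (by rw [add_zero, show z - v + v = z from by abel]; exact hr)
    have h10 : R w₁ 0 := htrans _ _ _
      (by have h2 := htr w₁ 0 w₂ h02; rwa [add_zero, ← hsv] at h2) hv0'
    have hdF : z - w₁ ∈ F := by
      have h2 := fibadd (z - v) w₂ w₁ hw₂L hsc'' hzvF
        (by rw [show z - v + (w₂ + w₁) = z from by rw [hsv]; abel]; exact hzF)
      rwa [show z - v + w₂ = z - w₁ from by rw [hsv]; abel] at h2
    have step2 : dstep F (G \ {v}) R z (z - w₁) :=
      ⟨hzF, hdF, Or.inr (by rw [sub_sub_cancel]; exact hw₁G),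
        by have h2 := htr (z - w₁) w₁ 0 h10
           rwa [add_zero, show z - w₁ + w₁ = z from by abel] at h2⟩
    have step3 : dstep F (G \ {v}) R (z - w₁) (z - v) :=
      ⟨hdF, hzvF, Or.inr (by rw [show z - w₁ - (z - v) = w₂ from by rw [hsv]; abel]; exact hw₂G),
        by have h2 := htr (z - v) w₂ 0 h20
           rwa [add_zero, show z - v + w₂ = z - w₁ from by rw [hsv]; abel] at h2⟩
    exact (huz.tail step2).tail step3
  have simdir : ∀ u z z', isSink F (G \ {v}) R u →
      Relation.ReflTransGen (dstep F (G \ {v}) R) u z → dstep F G R z z' →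
      Relation.ReflTransGen (dstep F (G \ {v}) R) u z' := by
    intro u z z' hu huz hstep
    obtain ⟨hzF, hz'F, hd, hr⟩ := hstep
    rcases hd with h | h
    · by_cases hvv : z' - z = v
      · have hz' : z' = z + v := by rw [← hvv]; abel
        subst hz'
        have h0v : R 0 v := hrev z 0 v (by rw [add_zero]; exact hr)
        rcases htotal 0 v₂ with h2 | h2
        · exact step_up v₁ v₂ hv₁G' hv₂G' hv₁L hv₂L hsum hsc u z hu huz hzF hz'F h2 hr
        · have hvv₁ : R v v₁ := by
            have h3 := htr v₁ v₂ 0 h2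
            rwa [← hsum, add_zero] at h3
          have h01 : R 0 v₁ := htrans _ _ _ h0v hvv₁
          exact step_up v₂ v₁ hv₂G' hv₁G' hv₂L hv₁L hsum' hscsym u z hu huz hzF hz'F h01 hr
      · exact huz.tail ⟨hzF, hz'F, Or.inl ⟨h, by simpa using hvv⟩, hr⟩
    · by_cases hvv : z - z' = v
      · have hz' : z' = z - v := by rw [← hvv]; abel
        subst hz'
        have hv0' : R v 0 := hrev (z - v) v 0
          (by rw [add_zero, show z - v + v = z from by abel]; exact hr)
        rcases htotal v₂ 0 with h2 | h2
        · exact step_down v₁ v₂ hv₁G' hv₂G' hv₁L hv₂L hsum hsc u z hu huz hzF hz'F h2 hr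
        · have h1 : R v₁ 0 := htrans _ _ _
            (by have h3 := htr v₁ 0 v₂ h2; rwa [add_zero, ← hsum] at h3) hv0'
          exact step_down v₂ v₁ hv₂G' hv₁G' hv₂L hv₁L hsum' hscsym u z hu huz hzF hz'F h1 hr
      · exact huz.tail ⟨hzF, hz'F, Or.inr ⟨h, by simpa using hvv⟩, hr⟩
  have simA : ∀ u, isSink F (G \ {v}) R u → ∀ z,
      Relation.ReflTransGen (dstep F G R) u z →
      Relation.ReflTransGen (dstep F (G \ {v}) R) u z := by
    intro u hu z hz
    induction hz with
    | refl => exact Relation.ReflTransGen.refl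
    | tail _ h2 ih => exact simdir u _ _ hu ih h2
  have sinktransfer : ∀ u, isSink F (G \ {v}) R u → isSink F G R u := by
    intro u hu
    exact ⟨hu.1, fun z hz => monoRTG (hu.2 z (simA u hu z hz))⟩
  have symstep : ∀ a b, a ∈ F → b ∈ F → (b - a ∈ G \ {v} ∨ a - b ∈ G \ {v}) →
      (dstep F (G \ {v}) R a b ∨ dstep F (G \ {v}) R b a) := by
    intro a b ha hb hd
    rcases htotal a b with h | h
    · exact Or.inl ⟨ha, hb, hd, h⟩
    · exact Or.inr ⟨hb, ha, hd.symm, h⟩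
  have simundir : ∀ a b, dstep F G R a b →
      Relation.ReflTransGen (fun x y => dstep F (G \ {v}) R x y ∨ dstep F (G \ {v}) R y x) a b := by
    intro a b hab
    obtain ⟨haF, hbF, hd, hr⟩ := hab
    rcases hd with h | h
    · by_cases hvv : b - a = v
      · have hb : b = a + v := by rw [← hvv]; abel
        subst hb
        have hcF : a + v₁ ∈ F := fibadd a v₁ v₂ hv₁L hsc haF (by rw [← hsum]; exact hbF)
        refine Relation.ReflTransGen.head
          (symstep a (a + v₁) haF hcF (Or.inl ?_))
          (Relation.ReflTransGen.single (symstep (a + v₁) (a + v) hcF hbF (Or.inl ?_)))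
        · rw [add_sub_cancel_left]; exact hv₁G'
        · rw [show a + v - (a + v₁) = v₂ from by rw [hsum]; abel]; exact hv₂G'
      · exact Relation.ReflTransGen.single (symstep a b haF hbF (Or.inl ⟨h, by simpa using hvv⟩))
    · by_cases hvv : a - b = v
      · have ha : a = b + v := by rw [← hvv]; abel
        subst ha
        have hcF : b + v₁ ∈ F := fibadd b v₁ v₂ hv₁L hsc hbF (by rw [← hsum]; exact haF)
        refine Relation.ReflTransGen.head
          (symstep (b + v) (b + v₁) haF hcF (Or.inr ?_))
          (Relation.ReflTransGen.single (symstep (b + v₁) b hcF hbF (Or.inr ?_)))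
        · rw [show b + v - (b + v₁) = v₂ from by rw [hsum]; abel]; exact hv₂G'
        · rw [add_sub_cancel_left]; exact hv₁G'
      · exact Relation.ReflTransGen.single (symstep a b haF hbF (Or.inr ⟨h, by simpa using hvv⟩))
  have hsymm : Symmetric (fun x y => dstep F (G \ {v}) R x y ∨ dstep F (G \ {v}) R y x) :=
    fun a b h => h.symm
  refine ⟨?_, ?_, ?_⟩
  · intro x hx y hy
    have p := hconn x hx y hy
    clear hy
    induction p with
    | refl => exact Relation.ReflTransGen.refl
    | tail _ h2 ih =>
      rcases h2 with h | h
      · exact ih.trans (simundir _ _ h)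
      · exact ih.trans ((@Relation.ReflTransGen.symmetric _ _ ⟨hsymm⟩).symm _ _ (simundir _ _ h))
  · intro x y hx hy
    obtain ⟨p, q⟩ := hsinkmut x y (sinktransfer x hx) (sinktransfer y hy)
    exact ⟨simA x hx y p, simA y hy x q⟩
  · intro x hx w hw
    exact hsinkmax x (sinktransfer x hx) w hw

end Stmt5
end

section
/- Let ℒ ⊆ ℤⁿ be a lattice. The Graver basis of ℒ (the set of primitive elements of ℒ) is a ⪰-Gröbner basis of the family of fibers {w ∈ ℕⁿ : w − u ∈ ℒ} for every additive preorder ⪰ on ℤⁿ; in particular it is a Markov basis of ℒ. -/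
namespace Stmt6

def isAddPreorder {n : ℕ} (R : (Fin n → ℤ) → (Fin n → ℤ) → Prop) : Prop :=
  (∀ u, R u u) ∧ (∀ u v w, R u v → R v w → R u w) ∧
  (∀ u v, R u v ∨ R v u) ∧ (∀ u v w, R u v → R (u + w) (v + w))

def dstep {n : ℕ} (F M : Set (Fin n → ℤ)) (R : (Fin n → ℤ) → (Fin n → ℤ) → Prop)
    (u v : Fin n → ℤ) : Prop :=
  u ∈ F ∧ v ∈ F ∧ (v - u ∈ M ∨ u - v ∈ M) ∧ R u v

def mutReach {n : ℕ} (F M : Set (Fin n → ℤ)) (R : (Fin n → ℤ) → (Fin n → ℤ) → Prop)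
    (u v : Fin n → ℤ) : Prop :=
  Relation.ReflTransGen (dstep F M R) u v ∧ Relation.ReflTransGen (dstep F M R) v u

def isSink {n : ℕ} (F M : Set (Fin n → ℤ)) (R : (Fin n → ℤ) → (Fin n → ℤ) → Prop)
    (u : Fin n → ℤ) : Prop :=
  u ∈ F ∧ ∀ v, Relation.ReflTransGen (dstep F M R) u v →
    Relation.ReflTransGen (dstep F M R) v u

def weakConn {n : ℕ} (F M : Set (Fin n → ℤ)) (R : (Fin n → ℤ) → (Fin n → ℤ) → Prop) : Prop :=
  ∀ u ∈ F, ∀ v ∈ F,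
    Relation.ReflTransGen (fun a b => dstep F M R a b ∨ dstep F M R b a) u v

def isGroebner {n : ℕ} (Fam : Set (Set (Fin n → ℤ))) (M : Set (Fin n → ℤ))
    (R : (Fin n → ℤ) → (Fin n → ℤ) → Prop) : Prop :=
  ∀ F ∈ Fam, weakConn F M R ∧
    (∀ u v, isSink F M R u → isSink F M R v → mutReach F M R u v) ∧
    (∀ u, isSink F M R u → ∀ v ∈ F, R v u)

/-- The family of all fibers `F^lat(ℒ,u) = {w ∈ ℕⁿ : w - u ∈ ℒ}` of a lattice `ℒ`. -/
def latFam {n : ℕ} (L : AddSubgroup (Fin n → ℤ)) : Set (Set (Fin n → ℤ)) :=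
  {F | ∃ u : Fin n → ℤ, F = {w | 0 ≤ w ∧ w - u ∈ L}}


/-- Undirected move step and connectivity. -/
def mstep {n : ℕ} (F M : Set (Fin n → ℤ)) (u v : Fin n → ℤ) : Prop :=
  u ∈ F ∧ v ∈ F ∧ (v - u ∈ M ∨ u - v ∈ M)

def isMarkov {n : ℕ} (Fam : Set (Set (Fin n → ℤ))) (M : Set (Fin n → ℤ)) : Prop :=
  ∀ F ∈ Fam, ∀ u ∈ F, ∀ v ∈ F, Relation.ReflTransGen (mstep F M) u v

/-- An element of the lattice is primitive if it has no nontrivial conformal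
(sign-consistent) decomposition within the lattice. -/
def isPrimitive {n : ℕ} (L : AddSubgroup (Fin n → ℤ)) (v : Fin n → ℤ) : Prop :=
  v ∈ L ∧ v ≠ 0 ∧ ∀ v₁ v₂ : Fin n → ℤ, v₁ ∈ L → v₂ ∈ L → v = v₁ + v₂ →
    (∀ i, 0 ≤ v₁ i * v₂ i) → v₁ = 0 ∨ v₂ = 0

/-- The Graver basis: the set of primitive elements of `ℒ`. -/
def graver {n : ℕ} (L : AddSubgroup (Fin n → ℤ)) : Set (Fin n → ℤ) :=
  {v | isPrimitive L v}

def norm1 {n : ℕ} (d : Fin n → ℤ) : ℕ := ∑ i, (d i).natAbs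

lemma natAbs_add_of_sign (a b : ℤ) (h : 0 ≤ a * b) :
    (a + b).natAbs = a.natAbs + b.natAbs := by
  rcases le_or_gt 0 a with ha | ha <;> rcases le_or_gt 0 b with hb | hb
  · omega
  · have : a * b ≤ 0 := mul_nonpos_of_nonneg_of_nonpos ha hb.le
    have : a * b = 0 := le_antisymm this h
    have : a = 0 ∨ b = 0 := mul_eq_zero.mp this
    omega
  · have : b * a ≤ 0 := mul_nonpos_of_nonneg_of_nonpos hb ha.le
    have : a * b = 0 := by nlinarith
    have : a = 0 ∨ b = 0 := mul_eq_zero.mp this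
    omega
  · omega

lemma norm1_eq_zero {n : ℕ} {d : Fin n → ℤ} (h : norm1 d = 0) : d = 0 := by
  funext i
  have := Finset.sum_eq_zero_iff.mp h i (Finset.mem_univ i)
  simpa using Int.natAbs_eq_zero.mp this

lemma norm1_split {n : ℕ} {a b : Fin n → ℤ} (h : ∀ i, 0 ≤ a i * b i) :
    norm1 (a + b) = norm1 a + norm1 b := by
  unfold norm1
  rw [← Finset.sum_add_distrib]
  exact Finset.sum_congr rfl fun i _ => natAbs_add_of_sign _ _ (h i)

lemma norm1_pos {n : ℕ} {d : Fin n → ℤ} (h : d ≠ 0) : 0 < norm1 d := by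
  rcases Nat.eq_zero_or_pos (norm1 d) with h0 | h0
  · exact absurd (norm1_eq_zero h0) h
  · exact h0

lemma conf_trans (a b c : ℤ) (h1 : 0 ≤ a * (b - a)) (h2 : 0 ≤ b * (c - b)) :
    0 ≤ a * (c - a) := by
  rcases lt_trichotomy a 0 with ha | ha | ha
  · have hb : b - a ≤ 0 := by nlinarith
    have hbneg : b < 0 := by omega
    have hc : c - b ≤ 0 := by nlinarith
    nlinarith
  · simp [ha]
  · have hb : 0 ≤ b - a := by nlinarith
    have hbpos : 0 < b := by omega
    have hc : 0 ≤ c - b := by nlinarith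
    nlinarith

lemma coord_mem (g d u : ℤ) (h : 0 ≤ g * (d - g)) (hu : 0 ≤ u) (hv : 0 ≤ u + d) :
    0 ≤ u + g ∧ 0 ≤ u + d - g := by
  rcases lt_trichotomy g 0 with hg | hg | hg
  · have : d - g ≤ 0 := by nlinarith
    omega
  · omega
  · have : 0 ≤ d - g := by nlinarith
    omega

/-- Every nonzero lattice element has a primitive conformal part. -/
lemma exists_primitive_conformal {n : ℕ} (L : AddSubgroup (Fin n → ℤ)) :
    ∀ N : ℕ, ∀ d : Fin n → ℤ, norm1 d ≤ N → d ∈ L → d ≠ 0 →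
      ∃ g, isPrimitive L g ∧ ∀ i, 0 ≤ g i * (d i - g i) := by
  intro N
  induction N with
  | zero => intro d hN hL hne; exact absurd (norm1_eq_zero (Nat.le_zero.mp hN)) hne
  | succ N ih =>
    intro d hN hL hne
    by_cases hp : isPrimitive L d
    · exact ⟨d, hp, fun i => by simp⟩
    · have : ∃ v₁ v₂ : Fin n → ℤ, v₁ ∈ L ∧ v₂ ∈ L ∧ d = v₁ + v₂ ∧
          (∀ i, 0 ≤ v₁ i * v₂ i) ∧ v₁ ≠ 0 ∧ v₂ ≠ 0 := by
        unfold isPrimitive at hp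
        push_neg at hp
        obtain ⟨v₁, v₂, h1, h2, h3, h4, h5, h6⟩ := hp hL hne
        exact ⟨v₁, v₂, h1, h2, h3, h4, h5, h6⟩
      obtain ⟨v₁, v₂, h1, h2, h3, h4, h5, h6⟩ := this
      have hsplit : norm1 d = norm1 v₁ + norm1 v₂ := h3 ▸ norm1_split h4
      have hlt : norm1 v₁ ≤ N := by have := norm1_pos h6; omega
      obtain ⟨g, hg, hconf⟩ := ih v₁ hlt h1 h5
      refine ⟨g, hg, fun i => ?_⟩
      have h4' : 0 ≤ v₁ i * (d i - v₁ i) := by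
        have : d i - v₁ i = v₂ i := by rw [h3]; simp
        rw [this]; exact h4 i
      exact conf_trans _ _ _ (hconf i) h4'

section Core
variable {n : ℕ} (L : AddSubgroup (Fin n → ℤ)) (base : Fin n → ℤ)

def fib : Set (Fin n → ℤ) := {w | 0 ≤ w ∧ w - base ∈ L}

lemma diff_mem {u v : Fin n → ℤ} (hu : u ∈ (fib L base)) (hv : v ∈ (fib L base)) : v - u ∈ L := by
  have := sub_mem hv.2 hu.2
  rwa [sub_sub_sub_cancel_right] at this

lemma conf_mem {u v g : Fin n → ℤ} (hu : u ∈ (fib L base)) (hv : v ∈ (fib L base))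
    (hconf : ∀ i, 0 ≤ g i * ((v - u) i - g i)) (hgL : g ∈ L) :
    (u + g) ∈ (fib L base) ∧ (v - g) ∈ (fib L base) := by
  have key : ∀ i, 0 ≤ u i + g i ∧ 0 ≤ u i + (v i - u i) - g i := by
    intro i
    refine coord_mem (g i) (v i - u i) (u i) (by simpa using hconf i) (hu.1 i) ?_
    have := hv.1 i
    simpa using this
  constructor
  · refine ⟨fun i => (key i).1, ?_⟩
    have : u + g - base = (u - base) + g := by ring
    rw [this]; exact add_mem hu.2 hgL
  · constructor
    · intro i
      have h2 := (key i).2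
      show (0:ℤ) ≤ v i - g i
      linarith
    · have : v - g - base = (v - base) - g := by ring
      rw [this]; exact sub_mem hv.2 hgL

lemma markov_core : ∀ N : ℕ, ∀ u v : Fin n → ℤ, u ∈ (fib L base) → v ∈ (fib L base) →
    norm1 (v - u) ≤ N → Relation.ReflTransGen (mstep (fib L base) (graver L)) u v := by
  intro N
  induction N with
  | zero =>
    intro u v hu hv hN
    have : v - u = 0 := norm1_eq_zero (Nat.le_zero.mp hN)
    have : v = u := by rwa [sub_eq_zero] at this
    exact this ▸ Relation.ReflTransGen.refl
  | succ N ih =>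
    intro u v hu hv hN
    by_cases huv : v = u
    · exact huv ▸ Relation.ReflTransGen.refl
    · have hdL : v - u ∈ L := diff_mem L base hu hv
      have hdne : v - u ≠ 0 := sub_ne_zero.mpr huv
      obtain ⟨g, hg, hconf⟩ :=
        exists_primitive_conformal L (norm1 (v - u)) (v - u) le_rfl hdL hdne
      obtain ⟨hugF, hvgF⟩ := conf_mem L base hu hv hconf hg.1
      have hstep : mstep (fib L base) (graver L) u (u + g) :=
        ⟨hu, hugF, Or.inl (by have hgrav : g ∈ graver L := hg; simpa using hgrav)⟩
      have hsplit : norm1 (v - u) = norm1 g + norm1 (v - u - g) := by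
        have h := norm1_split (a := g) (b := v - u - g) (fun i => by simpa using hconf i)
        rw [show g + (v - u - g) = v - u by ring] at h
        exact h
      have hgpos : 0 < norm1 g := norm1_pos hg.2.1
      have hrec : norm1 (v - (u + g)) ≤ N := by
        have : v - (u + g) = v - u - g := by ring
        rw [this]; omega
      exact Relation.ReflTransGen.head hstep (ih (u + g) v hugF hv hrec)

variable {R : (Fin n → ℤ) → (Fin n → ℤ) → Prop} (hR : isAddPreorder R)
include hR

lemma R_shift_iff (a b c : Fin n → ℤ) : R a b ↔ R (a + c) (b + c) := by
  constructor
  · exact fun h => hR.2.2.2 a b c h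
  · intro h
    have := hR.2.2.2 _ _ (-c) h
    simpa using this

lemma R_zero_sub {a b : Fin n → ℤ} (h : R a b) : R 0 (b - a) := by
  have := (R_shift_iff hR a b (-a)).mp h
  simpa [sub_eq_add_neg] using this

lemma R_of_zero_sub {a b : Fin n → ℤ} (h : R 0 (b - a)) : R a b := by
  have := (R_shift_iff hR 0 (b - a) a).mp h
  simpa using this

lemma pathR {F M : Set (Fin n → ℤ)} {a b : Fin n → ℤ}
    (h : Relation.ReflTransGen (dstep F M R) a b) : R a b := by
  induction h with
  | refl => exact hR.1 a
  | tail _ hstep ih => exact hR.2.1 _ _ _ ih hstep.2.2.2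

/-- From a sink, no reachable point can be strictly above. -/
lemma sink_ret {F M : Set (Fin n → ℤ)} {s w : Fin n → ℤ} (hs : isSink F M R s)
    (h : Relation.ReflTransGen (dstep F M R) s w) : R w s :=
  pathR hR (hs.2 w h)


lemma no_strict_up {s a b : Fin n → ℤ} {F M : Set (Fin n → ℤ)}
    (hs : isSink F M R s) (hsa : Relation.ReflTransGen (dstep F M R) s a)
    (hstep : dstep F M R a b) (hnb : ¬ R b a) : False := by
  have hbs : R b s := sink_ret hR hs (hsa.tail hstep)
  have hsa' : R s a := pathR hR hsa
  exact hnb (hR.2.1 _ _ _ hbs hsa')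

lemma g_equiv {s t u v g : Fin n → ℤ}
    (hs : isSink (fib L base) (graver L) R s) (ht : isSink (fib L base) (graver L) R t)
    (hsu : Relation.ReflTransGen (dstep (fib L base) (graver L) R) s u)
    (htv : Relation.ReflTransGen (dstep (fib L base) (graver L) R) t v)
    (hu : u ∈ fib L base) (hv : v ∈ fib L base) (hgrav : g ∈ graver L)
    (hugF : u + g ∈ fib L base) (hvgF : v - g ∈ fib L base) : R 0 g ∧ R g 0 := by
  constructor
  · by_contra h0n
    have hg0 : R g 0 := (hR.2.2.1 g 0).resolve_right h0n
    have hRv : R v (v - g) := by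
      have h := hR.2.2.2 g 0 (v - g) hg0
      rw [show g + (v - g) = v by ring, zero_add] at h
      exact h
    have hstep : dstep (fib L base) (graver L) R v (v - g) :=
      ⟨hv, hvgF, Or.inr (by simpa using hgrav), hRv⟩
    refine no_strict_up hR ht htv hstep ?_
    intro h
    have h2 := hR.2.2.2 (v - g) v (g - v) h
    rw [show v - g + (g - v) = 0 by ring, show v + (g - v) = g by ring] at h2
    exact h0n h2
  · by_contra hgn
    have h0g : R 0 g := (hR.2.2.1 g 0).resolve_left hgn
    have hRu : R u (u + g) := by
      have h := hR.2.2.2 0 g u h0g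
      rw [zero_add, add_comm g u] at h
      exact h
    have hstep : dstep (fib L base) (graver L) R u (u + g) :=
      ⟨hu, hugF, Or.inl (by simpa using hgrav), hRu⟩
    refine no_strict_up hR hs hsu hstep ?_
    intro h
    have h2 := hR.2.2.2 (u + g) u (-u) h
    rw [show u + g + -u = g by ring, show u + -u = 0 by ring] at h2
    exact hgn h2

lemma sink_conn {s t : Fin n → ℤ}
    (hs : isSink (fib L base) (graver L) R s) (ht : isSink (fib L base) (graver L) R t) :
    ∀ N : ℕ, ∀ u v : Fin n → ℤ, u ∈ fib L base → v ∈ fib L base →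
      Relation.ReflTransGen (dstep (fib L base) (graver L) R) s u →
      Relation.ReflTransGen (dstep (fib L base) (graver L) R) t v →
      norm1 (v - u) ≤ N → mutReach (fib L base) (graver L) R u v := by
  intro N
  induction N with
  | zero =>
    intro u v hu hv _ _ hN
    have : v = u := by
      have := norm1_eq_zero (Nat.le_zero.mp hN)
      rwa [sub_eq_zero] at this
    subst this
    exact ⟨Relation.ReflTransGen.refl, Relation.ReflTransGen.refl⟩
  | succ N ih =>
    intro u v hu hv hsu htv hN
    by_cases huv : v = u
    · subst huv
      exact ⟨Relation.ReflTransGen.refl, Relation.ReflTransGen.refl⟩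
    · have hdL : v - u ∈ L := diff_mem L base hu hv
      have hdne : v - u ≠ 0 := sub_ne_zero.mpr huv
      obtain ⟨g, hg, hconf⟩ :=
        exists_primitive_conformal L (norm1 (v - u)) (v - u) le_rfl hdL hdne
      obtain ⟨hugF, hvgF⟩ := conf_mem L base hu hv hconf hg.1
      have hgrav : g ∈ graver L := hg
      obtain ⟨h0g, hg0⟩ := g_equiv L base hR hs ht hsu htv hu hv hgrav hugF hvgF
      have hRu : R u (u + g) := by
        have h := hR.2.2.2 0 g u h0g
        rw [zero_add, add_comm g u] at h
        exact h
      have hRu' : R (u + g) u := by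
        have h := hR.2.2.2 g 0 u hg0
        rw [zero_add, add_comm g u] at h
        exact h
      have step1 : dstep (fib L base) (graver L) R u (u + g) :=
        ⟨hu, hugF, Or.inl (by simpa using hgrav), hRu⟩
      have step2 : dstep (fib L base) (graver L) R (u + g) u :=
        ⟨hugF, hu, Or.inr (by simpa using hgrav), hRu'⟩
      have hsplit : norm1 (v - u) = norm1 g + norm1 (v - u - g) := by
        have h := norm1_split (a := g) (b := v - u - g) (fun i => by simpa using hconf i)
        rw [show g + (v - u - g) = v - u by ring] at h
        exact h
      have hgpos : 0 < norm1 g := norm1_pos hg.2.1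
      have hrec : norm1 (v - (u + g)) ≤ N := by
        rw [show v - (u + g) = v - u - g by ring]; omega
      have hmr := ih (u + g) v hugF hv (hsu.tail step1) htv hrec
      exact ⟨(Relation.ReflTransGen.single step1).trans hmr.1,
        hmr.2.trans (Relation.ReflTransGen.single step2)⟩

lemma sink_max {s : Fin n → ℤ} (hs : isSink (fib L base) (graver L) R s) :
    ∀ N : ℕ, ∀ v : Fin n → ℤ, v ∈ fib L base → norm1 (v - s) ≤ N → R v s := by
  intro N
  induction N with
  | zero =>
    intro v hv hN
    have : v = s := by
      have := norm1_eq_zero (Nat.le_zero.mp hN)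
      rwa [sub_eq_zero] at this
    subst this
    exact hR.1 v
  | succ N ih =>
    intro v hv hN
    by_cases hvs : v = s
    · subst hvs; exact hR.1 v
    · have hdL : v - s ∈ L := diff_mem L base hs.1 hv
      have hdne : v - s ≠ 0 := sub_ne_zero.mpr hvs
      obtain ⟨g, hg, hconf⟩ :=
        exists_primitive_conformal L (norm1 (v - s)) (v - s) le_rfl hdL hdne
      obtain ⟨hsgF, hvgF⟩ := conf_mem L base hs.1 hv hconf hg.1
      have hgrav : g ∈ graver L := hg
      have hg0 : R g 0 := by
        by_contra hgn
        have h0g : R 0 g := (hR.2.2.1 g 0).resolve_left hgn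
        have hRs : R s (s + g) := by
          have h := hR.2.2.2 0 g s h0g
          rw [zero_add, add_comm g s] at h
          exact h
        have hstep : dstep (fib L base) (graver L) R s (s + g) :=
          ⟨hs.1, hsgF, Or.inl (by simpa using hgrav), hRs⟩
        refine no_strict_up hR hs Relation.ReflTransGen.refl hstep ?_
        intro h
        have h2 := hR.2.2.2 (s + g) s (-s) h
        rw [show s + g + -s = g by ring, show s + -s = 0 by ring] at h2
        exact hgn h2
      have hsplit : norm1 (v - s) = norm1 g + norm1 (v - s - g) := by
        have h := norm1_split (a := g) (b := v - s - g) (fun i => by simpa using hconf i)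
        rw [show g + (v - s - g) = v - s by ring] at h
        exact h
      have hgpos : 0 < norm1 g := norm1_pos hg.2.1
      have hrec : norm1 (v - g - s) ≤ N := by
        rw [show v - g - s = v - s - g by ring]; omega
      have hvg : R (v - g) s := ih (v - g) hvgF hrec
      have hRv : R v (v - g) := by
        have h := hR.2.2.2 g 0 (v - g) hg0
        rw [show g + (v - g) = v by ring, zero_add] at h
        exact h
      exact hR.2.1 _ _ _ hRv hvg

lemma mstep_or {F M : Set (Fin n → ℤ)} {u v : Fin n → ℤ} (h : mstep F M u v) :
    dstep F M R u v ∨ dstep F M R v u := by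
  rcases hR.2.2.1 u v with hr | hr
  · exact Or.inl ⟨h.1, h.2.1, h.2.2, hr⟩
  · exact Or.inr ⟨h.2.1, h.1, h.2.2.symm, hr⟩

end Core

/-- the Graver basis of `ℒ` is a `⪰`-Gröbner basis of the family of
lattice fibers for every additive preorder `⪰` (fibers being finite, or well-ordered
by `⪰`); in particular it is a Markov basis of `ℒ`. -/
theorem stmt_6 (n : ℕ) (L : AddSubgroup (Fin n → ℤ)) :
    (∀ R : (Fin n → ℤ) → (Fin n → ℤ) → Prop, isAddPreorder R →
      (∀ u : Fin n → ℤ, ({w | 0 ≤ w ∧ w - u ∈ L} : Set (Fin n → ℤ)).Finite ∨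
        ({w | 0 ≤ w ∧ w - u ∈ L} : Set (Fin n → ℤ)).WellFoundedOn
          (fun a b => R b a ∧ ¬ R a b)) →
      isGroebner (latFam L) (graver L) R) ∧
    isMarkov (latFam L) (graver L) := by
  constructor
  · intro R hR _
    intro F hF
    obtain ⟨base, rfl⟩ := hF
    refine ⟨?_, ?_, ?_⟩
    · intro u hu v hv
      exact Relation.ReflTransGen.mono (fun a b h => mstep_or hR h) u v
        (markov_core L base (norm1 (v - u)) u v hu hv le_rfl)
    · intro u v hsu hsv
      exact sink_conn L base hR hsu hsv (norm1 (v - u)) u v hsu.1 hsv.1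
        Relation.ReflTransGen.refl Relation.ReflTransGen.refl le_rfl
    · intro u hsu v hv
      exact sink_max L base hR hsu (norm1 (v - u)) v hv le_rfl
  · intro F hF
    obtain ⟨base, rfl⟩ := hF
    intro u hu v hv
    exact markov_core L base (norm1 (v - u)) u v hu hv le_rfl

end Stmt6
end

section
/- Let ℱ be a family of subsets of ℤⁿ, φ : ℤⁿ → ℤᵗ a linear map. Suppose a Markov basis ℳ₀ ∪ ℳ₁ is given where ℳ₀ connects every fiber F ∩ (u + ker φ) for F ∈ ℱ, u ∈ ℤⁿ, and ℳ₁ is an (ℱ, φ, ⪰₀)-lift of a Markov basis 𝒢 of φ(ℱ). Then ℳ₀ ∪ ℳ₁ is a Markov basis of ℱ, i.e., for every F ∈ ℱ the graph with vertex set F and edges {u,v} for u−v ∈ ±(ℳ₀ ∪ ℳ₁) is connected. -/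
namespace Stmt9

def mstep {ι : Type*} (F M : Set (ι → ℤ)) (u v : ι → ℤ) : Prop :=
  u ∈ F ∧ v ∈ F ∧ (v - u ∈ M ∨ u - v ∈ M)

def connects {ι : Type*} (M F : Set (ι → ℤ)) : Prop :=
  ∀ u ∈ F, ∀ v ∈ F, Relation.ReflTransGen (mstep F M) u v

def isMarkov {ι : Type*} (Fam : Set (Set (ι → ℤ))) (M : Set (ι → ℤ)) : Prop :=
  ∀ F ∈ Fam, connects M F

/-- `M` is an `(ℱ, φ, ⪰₀)`-lift of `G` (the trivial preorder version). -/
def isLift0 {n t : ℕ} (Fam : Set (Set (Fin n → ℤ))) (φ : (Fin n → ℤ) →ₗ[ℤ] (Fin t → ℤ))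
    (G : Set (Fin t → ℤ)) (M : Set (Fin n → ℤ)) : Prop :=
  ∀ F ∈ Fam, ∀ v ∈ F, ∀ v' ∈ F, φ (v - v') ∈ G →
    ∃ m₀ m : Fin n → ℤ, φ m₀ = 0 ∧ m ∈ M ∧ v + m₀ ∈ F ∧ v + m₀ + m ∈ F ∧
      φ (v + m₀ + m) = φ v'

/-- a kernel Markov basis together with a lift of a Markov basis of the
projected fibers is a Markov basis of `ℱ`. -/
theorem stmt_9 (n t : ℕ) (Fam : Set (Set (Fin n → ℤ)))
    (φ : (Fin n → ℤ) →ₗ[ℤ] (Fin t → ℤ))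
    (G : Set (Fin t → ℤ))
    (hG : isMarkov {S | ∃ F ∈ Fam, S = φ '' F} G)
    (M₁ : Set (Fin n → ℤ)) (hM₁ : isLift0 Fam φ G M₁)
    (M₀ : Set (Fin n → ℤ))
    (hM₀ : ∀ F ∈ Fam, ∀ u : Fin n → ℤ, connects M₀ (F ∩ {x | φ (x - u) = 0})) :
    isMarkov Fam (M₀ ∪ M₁) := by
  intro F hF u hu v hv
  have hsub : ∀ (S : Set (Fin n → ℤ)) (x y : Fin n → ℤ),
      Relation.ReflTransGen (mstep (F ∩ S) M₀) x y →
      Relation.ReflTransGen (mstep F (M₀ ∪ M₁)) x y := by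
    intro S x y h
    refine Relation.ReflTransGen.mono ?_ x y h
    rintro a b ⟨ha, hb, hab⟩
    exact ⟨ha.1, hb.1, hab.imp Or.inl Or.inl⟩
  have fiber : ∀ x ∈ F, ∀ y ∈ F, φ x = φ y →
      Relation.ReflTransGen (mstep F (M₀ ∪ M₁)) x y := by
    intro x hx y hy hxy
    refine hsub _ x y (hM₀ F hF x x ⟨hx, ?_⟩ y ⟨hy, ?_⟩)
    · simp [Set.mem_setOf_eq, map_sub]
    · simp [Set.mem_setOf_eq, map_sub, hxy]
  have hchain : Relation.ReflTransGen (mstep (φ '' F) G) (φ u) (φ v) :=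
    hG _ ⟨F, hF, rfl⟩ _ ⟨u, hu, rfl⟩ _ ⟨v, hv, rfl⟩
  suffices h : ∀ a : Fin t → ℤ, Relation.ReflTransGen (mstep (φ '' F) G) a (φ v) →
      ∀ u' ∈ F, φ u' = a → Relation.ReflTransGen (mstep F (M₀ ∪ M₁)) u' v by
    exact h (φ u) hchain u hu rfl
  intro a hch
  induction hch using Relation.ReflTransGen.head_induction_on with
  | refl => intro u' hu' hphi; exact fiber u' hu' v hv hphi
  | @head a c h' hrest ih =>
    intro u' hu' hphi
    obtain ⟨haF, hcF, hG'⟩ := h'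
    obtain ⟨w, hw, hwc⟩ := hcF
    cases hG' with
    | inl hcma =>
      obtain ⟨m₀, m, hm₀, hm, h1, h2, h3⟩ :=
        hM₁ F hF w hw u' hu' (by rw [map_sub, hwc, hphi]; exact hcma)
      have p1 := fiber u' hu' _ h2 h3.symm
      have step : mstep F (M₀ ∪ M₁) (w + m₀ + m) (w + m₀) :=
        ⟨h2, h1, Or.inr (by simpa using Or.inr hm)⟩
      have p2 := fiber (w + m₀) h1 w hw (by rw [map_add, hm₀, add_zero])
      exact p1.trans ((Relation.ReflTransGen.single step).trans (p2.trans (ih w hw hwc)))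
    | inr hamc =>
      obtain ⟨m₀, m, hm₀, hm, h1, h2, h3⟩ :=
        hM₁ F hF u' hu' w hw (by rw [map_sub, hphi, hwc]; exact hamc)
      have p1 := fiber u' hu' _ h1 (by rw [map_add, hm₀, add_zero])
      have step : mstep F (M₀ ∪ M₁) (u' + m₀) (u' + m₀ + m) :=
        ⟨h1, h2, Or.inl (by simpa using Or.inr hm)⟩
      exact p1.trans ((Relation.ReflTransGen.single step).trans (ih _ h2 (h3.trans hwc)))


end Stmt9
end

section
/- Let ℬ ∈ ℤ^{h×n}, φ : ℤⁿ → ℤᵗ linear, and suppose the affine semigroup ℕℬ^φ generated by the columns (bᵢ, φ(eᵢ)) ∈ ℤ^{h+t} is normal (equals ℤℬ^φ ∩ ℝ≥0·ℬ^φ). Then there exists an integer matrix D ∈ ℤ^{r×t} and a lattice ℒ = {u ∈ ℤᵗ : (0,u) ∈ ℤℬ^φ} such that for every b ∈ ℕℬ there exist c ∈ ℤʳ and v ∈ ℤᵗ with φ(F(ℬ,b)) = {u ∈ ℒ + v : Du ≥ c}, where F(ℬ,b) = {w ∈ ℕⁿ : ℬw = b}. -/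
namespace Stmt11

/-- The `i`-th column `(bᵢ, φ(eᵢ))` of the augmented matrix `ℬ^φ`. -/
def col {h n t : ℕ} (B : Matrix (Fin h) (Fin n) ℤ)
    (φ : (Fin n → ℤ) →ₗ[ℤ] (Fin t → ℤ)) (i : Fin n) :
    (Fin h → ℤ) × (Fin t → ℤ) :=
  (fun j => B j i, φ (Pi.single i 1))

/-- The affine semigroup `ℕℬ^φ`. -/
def Nspan {h n t : ℕ} (B : Matrix (Fin h) (Fin n) ℤ)
    (φ : (Fin n → ℤ) →ₗ[ℤ] (Fin t → ℤ)) : Set ((Fin h → ℤ) × (Fin t → ℤ)) :=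
  {x | ∃ a : Fin n → ℕ, x = ∑ i, (a i : ℤ) • col B φ i}

/-- The lattice `ℤℬ^φ`. -/
def Zspan {h n t : ℕ} (B : Matrix (Fin h) (Fin n) ℤ)
    (φ : (Fin n → ℤ) →ₗ[ℤ] (Fin t → ℤ)) : Set ((Fin h → ℤ) × (Fin t → ℤ)) :=
  {x | ∃ a : Fin n → ℤ, x = ∑ i, a i • col B φ i}

/-- Membership in the rational cone `ℝ≥0 ℬ^φ` (rational coefficients suffice for
integer points of a rational cone). -/
def inCone {h n t : ℕ} (B : Matrix (Fin h) (Fin n) ℤ)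
    (φ : (Fin n → ℤ) →ₗ[ℤ] (Fin t → ℤ)) (x : (Fin h → ℤ) × (Fin t → ℤ)) : Prop :=
  ∃ a : Fin n → ℚ, (∀ i, 0 ≤ a i) ∧
    (∀ j, (x.1 j : ℚ) = ∑ i, a i * ((col B φ i).1 j : ℚ)) ∧
    (∀ j, (x.2 j : ℚ) = ∑ i, a i * ((col B φ i).2 j : ℚ))



/-- One-variable Fourier–Motzkin elimination. -/
lemma elim_one {κ : Type} [Fintype κ] (α β : κ → ℚ) :
    (∃ y : ℚ, ∀ k, 0 ≤ α k * y + β k) ↔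
      ((∀ k, α k = 0 → 0 ≤ β k) ∧
        ∀ i j, 0 < α i → α j < 0 → 0 ≤ α i * β j - α j * β i) := by
  constructor
  · rintro ⟨y, hy⟩
    refine ⟨fun k hk => by have := hy k; simpa [hk] using this, fun i j hi hj => ?_⟩
    have h1 := hy i; have h2 := hy j
    nlinarith
  · rintro ⟨h0, hpn⟩
    by_cases hL : ∃ i, 0 < α i
    · obtain ⟨i₀, hi₀s, hmax⟩ :=
        (Finset.univ.filter fun i => 0 < α i).exists_max_image (fun i => -β i / α i)
          ⟨hL.choose, by simp [hL.choose_spec]⟩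
      have hi₀ : 0 < α i₀ := by simpa using hi₀s
      refine ⟨-β i₀ / α i₀, fun k => ?_⟩
      have key : α i₀ * (-β i₀ / α i₀) = -β i₀ := by
        rw [mul_comm, div_mul_cancel₀ _ (ne_of_gt hi₀)]
      rcases lt_trichotomy (α k) 0 with hk | hk | hk
      · have h := hpn i₀ k hi₀ hk
        by_contra hc
        push_neg at hc
        nlinarith
      · have := h0 k hk
        rw [hk]; linarith
      · have hm := hmax k (by simpa using hk)
        have := mul_le_mul_of_nonneg_left hm (le_of_lt hk)
        have key2 : α k * (-β k / α k) = -β k := by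
          rw [mul_comm, div_mul_cancel₀ _ (ne_of_gt hk)]
        rw [key2] at this
        linarith
    · push_neg at hL
      by_cases hU : ∃ j, α j < 0
      · obtain ⟨j₀, hj₀s, hmin⟩ :=
          (Finset.univ.filter fun j => α j < 0).exists_min_image (fun j => -β j / α j)
            ⟨hU.choose, by simp [hU.choose_spec]⟩
        have hj₀ : α j₀ < 0 := by simpa using hj₀s
        refine ⟨-β j₀ / α j₀, fun k => ?_⟩
        rcases lt_trichotomy (α k) 0 with hk | hk | hk
        · have hm := hmin k (by simpa using hk)
          have := mul_le_mul_of_nonpos_left hm (le_of_lt hk)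
          have key2 : α k * (-β k / α k) = -β k := by
            rw [mul_comm, div_mul_cancel₀ _ (ne_of_lt hk)]
          rw [key2] at this
          linarith
        · have := h0 k hk
          rw [hk]; linarith
        · exact absurd hk (not_lt.2 (hL k))
      · push_neg at hU
        refine ⟨0, fun k => ?_⟩
        have hk : α k = 0 := le_antisymm (hL k) (hU k)
        have := h0 k hk
        rw [hk]; linarith

lemma dot_combo {ι : Type} [Fintype ι] (c c' : ℚ) (f g a : ι → ℚ) :
    ∑ i, (c * f i - c' * g i) * a i = c * ∑ i, f i * a i - c' * ∑ i, g i * a i := by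
  rw [Finset.mul_sum, Finset.mul_sum, ← Finset.sum_sub_distrib]
  exact Finset.sum_congr rfl fun i _ => by ring

/-- Fourier–Motzkin elimination of `n` variables. -/
lemma fm (δ : Type) [Fintype δ] :
    ∀ (n : ℕ) (κ : Type) [Fintype κ], ∀ (P : κ → Fin n → ℚ) (Q : κ → δ → ℚ),
    ∃ (s : ℕ) (R : Fin s → δ → ℚ), ∀ x : δ → ℚ,
      ((∃ a : Fin n → ℚ, ∀ k, 0 ≤ (∑ i, P k i * a i) + ∑ j, Q k j * x j) ↔
        (∀ m, 0 ≤ ∑ j, R m j * x j)) := by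
  intro n
  induction n with
  | zero =>
    intro κ _ P Q
    refine ⟨Fintype.card κ, fun m => Q ((Fintype.equivFin κ).symm m), fun x => ?_⟩
    constructor
    · rintro ⟨a, ha⟩ m
      simpa using ha ((Fintype.equivFin κ).symm m)
    · intro hm
      refine ⟨fun i => 0, fun k => ?_⟩
      simpa using hm (Fintype.equivFin κ k)
  | succ n ih =>
    intro κ _ P Q
    set α : κ → ℚ := fun k => P k (Fin.last n) with hα
    set P' : κ → Fin n → ℚ := fun k i => P k i.castSucc with hP'
    classical
    set P₂ : (κ ⊕ κ × κ) → Fin n → ℚ :=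
      Sum.elim (fun k => if α k = 0 then P' k else 0)
        (fun p => if 0 < α p.1 ∧ α p.2 < 0 then
          (fun i => α p.1 * P' p.2 i - α p.2 * P' p.1 i) else 0) with hP₂
    set Q₂ : (κ ⊕ κ × κ) → δ → ℚ :=
      Sum.elim (fun k => if α k = 0 then Q k else 0)
        (fun p => if 0 < α p.1 ∧ α p.2 < 0 then
          (fun j => α p.1 * Q p.2 j - α p.2 * Q p.1 j) else 0) with hQ₂
    obtain ⟨s, R, hR⟩ := ih (κ ⊕ κ × κ) P₂ Q₂
    refine ⟨s, R, fun x => ?_⟩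
    rw [← hR x]
    set β : (Fin n → ℚ) → κ → ℚ := fun a' k => (∑ i, P' k i * a' i) + ∑ j, Q k j * x j with hβ
    have hsplit : ∀ (a' : Fin n → ℚ) (y : ℚ) (k : κ),
        (∑ i, P k i * (Fin.snoc a' y : Fin (n+1) → ℚ) i) + ∑ j, Q k j * x j
          = α k * y + β a' k := by
      intro a' y k
      rw [Fin.sum_univ_castSucc]
      simp only [Fin.snoc_castSucc, Fin.snoc_last, hβ, hP', hα]
      ring
    have hnew : ∀ a' : Fin n → ℚ,
        (∀ k' : κ ⊕ κ × κ, 0 ≤ (∑ i, P₂ k' i * a' i) + ∑ j, Q₂ k' j * x j) ↔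
        ((∀ k, α k = 0 → 0 ≤ β a' k) ∧
          ∀ i j, 0 < α i → α j < 0 → 0 ≤ α i * β a' j - α j * β a' i) := by
      intro a'
      rw [Sum.forall]
      apply and_congr
      · apply forall_congr'
        intro k
        by_cases hk : α k = 0 <;> simp [hP₂, hQ₂, hβ, hk]
      · constructor
        · intro hp i j hi hj
          have hh := hp (i, j)
          simp only [hP₂, hQ₂, Sum.elim_inr, if_pos (show 0 < α i ∧ α j < 0 from ⟨hi, hj⟩)] at hh
          rw [dot_combo, dot_combo] at hh
          simp only [hβ]
          linarith
        · intro hc p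
          by_cases hij : 0 < α p.1 ∧ α p.2 < 0
          · simp only [hP₂, hQ₂, Sum.elim_inr, if_pos hij]
            rw [dot_combo, dot_combo]
            have hh := hc p.1 p.2 hij.1 hij.2
            simp only [hβ] at hh
            linarith
          · simp [hP₂, hQ₂, Sum.elim_inr, if_neg hij]
    constructor
    · rintro ⟨a, ha⟩
      have h1 : ∃ y : ℚ, ∀ k, 0 ≤ α k * y + β (fun i => a i.castSucc) k := by
        refine ⟨a (Fin.last n), fun k => ?_⟩
        have := ha k
        rwa [show a = Fin.snoc (Fin.init a) (a (Fin.last n)) from (Fin.snoc_init_self a).symm,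
          hsplit] at this
      rw [elim_one] at h1
      exact ⟨Fin.init a, (hnew _).2 h1⟩
    · rintro ⟨a', ha'⟩
      have h2 := (hnew a').1 ha'
      rw [← elim_one] at h2
      obtain ⟨y, hy⟩ := h2
      exact ⟨Fin.snoc a' y, fun k => by rw [hsplit]; exact hy k⟩


/-- Weyl: a finitely generated cone over `ℚ` is polyhedral. -/
theorem weyl (δ : Type) [Fintype δ] [DecidableEq δ] (n : ℕ) (v : Fin n → δ → ℚ) :
    ∃ (s : ℕ) (R : Fin s → δ → ℚ), ∀ x : δ → ℚ,
      ((∃ a : Fin n → ℚ, (∀ i, 0 ≤ a i) ∧ ∀ j, x j = ∑ i, a i * v i j) ↔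
        ∀ m, 0 ≤ ∑ j, R m j * x j) := by
  classical
  set P : (Fin n ⊕ δ ⊕ δ) → Fin n → ℚ := Sum.elim (fun i i' => if i' = i then 1 else 0)
    (Sum.elim (fun j i' => -(v i' j)) (fun j i' => v i' j)) with hP
  set Q : (Fin n ⊕ δ ⊕ δ) → δ → ℚ := Sum.elim (fun _ => 0)
    (Sum.elim (fun j j' => if j' = j then 1 else 0) (fun j j' => if j' = j then -1 else 0)) with hQ
  obtain ⟨s, R, hR⟩ := fm δ n (Fin n ⊕ δ ⊕ δ) P Q
  refine ⟨s, R, fun x => ?_⟩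
  rw [← hR x]
  constructor
  · rintro ⟨a, ha, hx⟩
    refine ⟨a, fun k => ?_⟩
    rcases k with i | j | j
    · simpa [hP, hQ, ite_mul] using ha i
    · have := hx j
      simp [hP, hQ, ite_mul, Finset.sum_neg_distrib]
      rw [this]
      simp [mul_comm]
    · have := hx j
      simp [hP, hQ, ite_mul]
      rw [this]
      simp [mul_comm]
  · rintro ⟨a, ha⟩
    refine ⟨a, fun i => ?_, fun j => ?_⟩
    · simpa [hP, hQ, ite_mul] using ha (Sum.inl i)
    · have h1 := ha (Sum.inr (Sum.inl j))
      have h2 := ha (Sum.inr (Sum.inr j))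
      simp [hP, hQ, ite_mul] at h1 h2
      have : ∑ i, v i j * a i = ∑ i, a i * v i j := Finset.sum_congr rfl fun i _ => mul_comm _ _
      linarith


/-- Clear denominators: rational rows can be replaced by integer rows. -/
lemma integerize (δ : Type) [Fintype δ] [DecidableEq δ] (s : ℕ) (R : Fin s → δ → ℚ) :
    ∃ D : Fin s → δ → ℤ, ∀ (x : δ → ℚ) (m : Fin s),
      (0 ≤ ∑ j, R m j * x j ↔ 0 ≤ ∑ j, (D m j : ℚ) * x j) := by
  classical
  refine ⟨fun m j => (R m j).num * ∏ j' ∈ Finset.univ.erase j, ((R m j').den : ℤ),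
    fun x m => ?_⟩
  set N : ℚ := ∏ j', ((R m j').den : ℚ) with hNdef
  have hN : 0 < N := Finset.prod_pos fun j _ => by positivity
  have hD : ∀ j, (((R m j).num * ∏ j' ∈ Finset.univ.erase j, ((R m j').den : ℤ) : ℤ) : ℚ)
      = R m j * N := by
    intro j
    push_cast
    rw [hNdef, ← Finset.mul_prod_erase Finset.univ _ (Finset.mem_univ j), ← mul_assoc,
      Rat.mul_den_eq_num]
  have hsum : ∑ j, (((R m j).num * ∏ j' ∈ Finset.univ.erase j, ((R m j').den : ℤ) : ℤ) : ℚ) * x j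
      = N * ∑ j, R m j * x j := by
    rw [Finset.mul_sum]
    exact Finset.sum_congr rfl fun j _ => by rw [hD j]; ring
  rw [hsum]
  constructor
  · intro hx; positivity
  · intro hx
    nlinarith


lemma sum_smul_col {h n t : ℕ} (B : Matrix (Fin h) (Fin n) ℤ)
    (φ : (Fin n → ℤ) →ₗ[ℤ] (Fin t → ℤ)) (a : Fin n → ℤ) :
    ∑ i, a i • col B φ i = (B.mulVec a, φ a) := by
  have hφ : φ a = ∑ i, a i • φ (Pi.single i 1) := by
    conv_lhs => rw [show a = ∑ i, Pi.single i (a i) from (Finset.univ_sum_single a).symm]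
    rw [map_sum]
    refine Finset.sum_congr rfl fun i _ => ?_
    rw [← map_smul]
    congr 1
    ext j
    by_cases hji : j = i <;> simp [Pi.single_apply, hji]
  apply Prod.ext
  · rw [Prod.fst_sum]
    funext j
    simp only [col, Matrix.mulVec, dotProduct]
    rw [Finset.sum_apply]
    exact Finset.sum_congr rfl fun i _ => by simp [mul_comm]
  · rw [Prod.snd_sum, hφ]
    rfl

lemma phi_apply {n t : ℕ} (φ : (Fin n → ℤ) →ₗ[ℤ] (Fin t → ℤ)) (w : Fin n → ℤ) (j : Fin t) :
    φ w j = ∑ i, w i * φ (Pi.single i 1) j := by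
  have hφ : φ w = ∑ i, w i • φ (Pi.single i 1) := by
    conv_lhs => rw [show w = ∑ i, Pi.single i (w i) from (Finset.univ_sum_single w).symm]
    rw [map_sum]
    refine Finset.sum_congr rfl fun i _ => ?_
    rw [← map_smul]
    congr 1
    ext j
    by_cases hji : j = i <;> simp [Pi.single_apply, hji]
  rw [hφ, Finset.sum_apply]
  simp


/-- Lemma 3.7: if the semigroup `ℕℬ^φ` is normal, then with
`ℒ = {u : (0,u) ∈ ℤℬ^φ}` there is an integer matrix `D` such that every projected
fiber `φ(F(ℬ,b))`, `b ∈ ℕℬ`, has the form `{u ∈ ℒ + v : D u ≥ c}`. -/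
theorem stmt_11 (h n t : ℕ) (B : Matrix (Fin h) (Fin n) ℤ)
    (φ : (Fin n → ℤ) →ₗ[ℤ] (Fin t → ℤ))
    (hnormal : ∀ x, x ∈ Zspan B φ → inCone B φ x → x ∈ Nspan B φ) :
    ∃ (r : ℕ) (D : Matrix (Fin r) (Fin t) ℤ),
      ∀ b : Fin h → ℤ, (∃ w : Fin n → ℤ, 0 ≤ w ∧ B.mulVec w = b) →
        ∃ (c : Fin r → ℤ) (v : Fin t → ℤ),
          (⇑φ) '' {w | 0 ≤ w ∧ B.mulVec w = b} =
            {u | (0, u - v) ∈ Zspan B φ ∧ c ≤ D.mulVec u} := by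
  classical
  set V : Fin n → (Fin h ⊕ Fin t) → ℚ := fun i =>
    Sum.elim (fun j => (((col B φ i).1 j : ℤ) : ℚ)) (fun j => (((col B φ i).2 j : ℤ) : ℚ))
    with hV
  obtain ⟨s, R, hR⟩ := weyl (Fin h ⊕ Fin t) n V
  obtain ⟨D, hD⟩ := integerize (Fin h ⊕ Fin t) s R
  refine ⟨s, Matrix.of fun m j => D m (Sum.inr j), fun b hb => ?_⟩
  obtain ⟨w₀, hw₀, hBw₀⟩ := hb
  set X : (Fin t → ℤ) → (Fin h ⊕ Fin t) → ℚ := fun u =>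
    Sum.elim (fun j => ((b j : ℤ) : ℚ)) (fun j => ((u j : ℤ) : ℚ)) with hX
  have keyIneq : ∀ u : Fin t → ℤ,
      (∀ m, 0 ≤ ∑ j, R m j * X u j) ↔
        (fun m => -∑ j, D m (Sum.inl j) * b j) ≤
          (Matrix.of fun m j => D m (Sum.inr j)).mulVec u := by
    intro u
    refine forall_congr' fun m => ?_
    rw [hD]
    have hsum : ∑ j : Fin h ⊕ Fin t, (D m j : ℚ) * X u j
        = ((∑ j, D m (Sum.inl j) * b j + ∑ j, D m (Sum.inr j) * u j : ℤ) : ℚ) := by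
      rw [Fintype.sum_sum_type]
      push_cast
      simp [hX]
    rw [hsum, Int.cast_nonneg_iff]
    have hmv : (Matrix.of fun m j => D m (Sum.inr j)).mulVec u m
        = ∑ j, D m (Sum.inr j) * u j := by
      simp [Matrix.mulVec, dotProduct]
    rw [hmv]
    beta_reduce
    constructor <;> intro hh <;> linarith
  have keyCone : ∀ u : Fin t → ℤ,
      (inCone B φ (b, u) ↔ ∃ a : Fin n → ℚ, (∀ i, 0 ≤ a i) ∧
        ∀ j, X u j = ∑ i, a i * V i j) := by
    intro u
    constructor
    · rintro ⟨a, ha0, ha1, ha2⟩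
      refine ⟨a, ha0, fun j => ?_⟩
      rcases j with j | j
      · simpa [hX, hV] using ha1 j
      · simpa [hX, hV] using ha2 j
    · rintro ⟨a, ha0, ha⟩
      exact ⟨a, ha0, fun j => by simpa [hX, hV] using ha (Sum.inl j),
        fun j => by simpa [hX, hV] using ha (Sum.inr j)⟩
  refine ⟨fun m => -∑ j, D m (Sum.inl j) * b j, φ w₀, ?_⟩
  ext u
  simp only [Set.mem_image, Set.mem_setOf_eq]
  constructor
  · rintro ⟨w, ⟨hw, hBw⟩, rfl⟩
    refine ⟨⟨w - w₀, ?_⟩, ?_⟩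
    · rw [sum_smul_col]
      have h1 : B.mulVec (w - w₀) = 0 := by
        rw [Matrix.mulVec_sub, hBw, hBw₀, sub_self]
      rw [h1, map_sub]
    · apply (keyIneq (φ w)).1
      apply (hR (X (φ w))).1
      refine ⟨fun i => ((w i : ℤ) : ℚ), fun i => by simp only []; exact_mod_cast (by simpa using hw i : (0:ℤ) ≤ w i), fun j => ?_⟩
      rcases j with j | j
      · have hb : b j = ∑ i, w i * B j i := by
          rw [← hBw]
          simp [Matrix.mulVec, dotProduct, mul_comm]
        simp only [hX, Sum.elim_inl, hV, col]
        rw [hb]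
        push_cast
        rfl
      · have hu : φ w j = ∑ i, w i * φ (Pi.single i 1) j := phi_apply φ w j
        simp only [hX, Sum.elim_inr, hV, col]
        rw [hu]
        push_cast
        rfl
  · rintro ⟨hz, hineq⟩
    obtain ⟨a₀, ha₀⟩ := hz
    rw [sum_smul_col] at ha₀
    have ha₀1 : B.mulVec a₀ = 0 := by
      have := congrArg Prod.fst ha₀; exact this.symm
    have ha₀2 : φ a₀ = u - φ w₀ := by
      have := congrArg Prod.snd ha₀; exact this.symm
    have hz2 : ((b, u) : (Fin h → ℤ) × (Fin t → ℤ)) ∈ Zspan B φ := by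
      refine ⟨a₀ + w₀, ?_⟩
      rw [sum_smul_col, Matrix.mulVec_add, map_add, ha₀1, ha₀2, hBw₀]
      simp
    have hcone : inCone B φ (b, u) :=
      (keyCone u).2 ((hR (X u)).2 ((keyIneq u).2 hineq))
    obtain ⟨aN, haN⟩ := hnormal (b, u) hz2 hcone
    rw [sum_smul_col] at haN
    have h1 : B.mulVec (fun i => (aN i : ℤ)) = b := (congrArg Prod.fst haN).symm
    have h2 : φ (fun i => (aN i : ℤ)) = u := (congrArg Prod.snd haN).symm
    exact ⟨fun i => (aN i : ℤ), ⟨fun i => Int.natCast_nonneg _, h1⟩, h2⟩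

end Stmt11
end

section
/- Let ℬ, ℬ' be integer matrices that are 𝒜-graded by surjections φ : [n] → [t] and φ' : [n'] → [t], and let ℬ ×_𝒜 ℬ' be their toric fiber product with projections ψ, ψ' and ξ = φ∘ψ = φ'∘ψ'. Then for all b ∈ ℕℬ and b' ∈ ℕℬ': ξ(F(ℬ×_𝒜ℬ', (b,b'))) = φ(F(ℬ, b)) ∩ φ'(F(ℬ', b')). -/
namespace Stmt12

/-- The marginalization map `ℤⁿ → ℤᵗ` induced by an index map `φ : [n] → [t]`,
sending `eᵢ ↦ e_{φ(i)}`. -/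
def marg {n t : ℕ} (φ : Fin n → Fin t) (v : Fin n → ℤ) : Fin t → ℤ :=
  fun a => ∑ i, if φ i = a then v i else 0

/-- The index set of the toric fiber product: pairs `(i,j)` with `φ(i) = φ'(j)`. -/
abbrev tfpIdx (n n' t : ℕ) (φ : Fin n → Fin t) (φ' : Fin n' → Fin t) :=
  {p : Fin n × Fin n' // φ p.1 = φ' p.2}

/-- The toric fiber product matrix `ℬ ×_𝒜 ℬ'`, with column `(i,j)` equal to
`(bᵢ ; b'ⱼ)`. -/
def tfpMat {h h' n n' t : ℕ} (B : Matrix (Fin h) (Fin n) ℤ)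
    (B' : Matrix (Fin h') (Fin n') ℤ) (φ : Fin n → Fin t) (φ' : Fin n' → Fin t) :
    Matrix (Fin h ⊕ Fin h') (tfpIdx n n' t φ φ') ℤ :=
  Matrix.of fun k p => Sum.elim (fun a => B a p.1.1) (fun a => B' a p.1.2) k

/-- The map `ξ` sending `e_{i,j}` to `e_{φ(i)} = e_{φ'(j)}`. -/
def xiMap {n n' t : ℕ} (φ : Fin n → Fin t) (φ' : Fin n' → Fin t)
    (w : tfpIdx n n' t φ φ' → ℤ) : Fin t → ℤ :=
  fun a => ∑ p : tfpIdx n n' t φ φ', if φ p.1.1 = a then w p else 0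

set_option linter.unnecessarySimpa false

lemma transport_aux (N : ℕ) {I J : Type} [Fintype I] [Fintype J]
    [DecidableEq I] [DecidableEq J]
    (x : I → ℤ) (y : J → ℤ) (hx : 0 ≤ x) (hy : 0 ≤ y)
    (hxN : ∑ i, x i = N) (hyN : ∑ j, y j = N) :
    ∃ w : I × J → ℤ, 0 ≤ w ∧ (∀ i, ∑ j, w (i, j) = x i) ∧
      (∀ j, ∑ i, w (i, j) = y j) := by
  induction N generalizing x y with
  | zero =>
    refine ⟨0, le_refl _, fun i => ?_, fun j => ?_⟩ <;> simp
    · symm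
      have := (Finset.sum_eq_zero_iff_of_nonneg (fun i _ => hx i)).mp hxN
      exact (this i (Finset.mem_univ i))
    · symm
      have := (Finset.sum_eq_zero_iff_of_nonneg (fun j _ => hy j)).mp hyN
      exact (this j (Finset.mem_univ j))
  | succ N ih =>
    have hxpos : ∃ i, 0 < x i := by
      by_contra hc
      push_neg at hc
      have : ∑ i, x i = 0 := le_antisymm (Finset.sum_nonpos (fun i _ => hc i))
        (Finset.sum_nonneg (fun i _ => hx i))
      omega
    have hypos : ∃ j, 0 < y j := by
      by_contra hc
      push_neg at hc
      have : ∑ j, y j = 0 := le_antisymm (Finset.sum_nonpos (fun j _ => hc j))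
        (Finset.sum_nonneg (fun j _ => hy j))
      omega
    obtain ⟨i0, hi0⟩ := hxpos
    obtain ⟨j0, hj0⟩ := hypos
    set x' := Function.update x i0 (x i0 - 1) with hx'def
    set y' := Function.update y j0 (y j0 - 1) with hy'def
    have hx' : 0 ≤ x' := by
      intro i
      by_cases hi : i = i0 <;> simp [hx'def, hi, Function.update] <;> [omega; exact hx i]
    have hy' : 0 ≤ y' := by
      intro j
      by_cases hj : j = j0 <;> simp [hy'def, hj, Function.update] <;> [omega; exact hy j]
    have hxs : ∑ i, x' i = N := by
      have : ∑ i, x' i = (∑ i, x i) - 1 := by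
        rw [hx'def, Finset.sum_update_of_mem (Finset.mem_univ i0), Finset.sdiff_singleton_eq_erase]
        rw [← Finset.sum_erase_add _ x (Finset.mem_univ i0)] ; ring
      omega
    have hys : ∑ j, y' j = N := by
      have : ∑ j, y' j = (∑ j, y j) - 1 := by
        rw [hy'def, Finset.sum_update_of_mem (Finset.mem_univ j0), Finset.sdiff_singleton_eq_erase]
        rw [← Finset.sum_erase_add _ y (Finset.mem_univ j0)] ; ring
      omega
    obtain ⟨w, hw0, hwr, hwc⟩ := ih x' y' hx' hy' hxs hys
    refine ⟨fun p => w p + if p = (i0, j0) then 1 else 0, fun p => ?_, fun i => ?_, fun j => ?_⟩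
    · have := hw0 p
      by_cases hp : p = (i0, j0) <;> simp [hp] at this ⊢ <;> omega
    · rw [Finset.sum_add_distrib, hwr i]
      by_cases hi : i = i0
      · subst hi
        have : ∑ j, (if ((i : I), j) = (i, j0) then (1:ℤ) else 0) = 1 := by
          simp [Prod.ext_iff]
        rw [this]
        simp [hx'def, Function.update]
      · have : ∑ j, (if ((i : I), j) = (i0, j0) then (1:ℤ) else 0) = 0 := by
          simp [Prod.ext_iff, hi]
        rw [this]
        simp [hx'def, Function.update, hi]
    · rw [Finset.sum_add_distrib, hwc j]
      by_cases hj : j = j0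
      · subst hj
        have : ∑ i', (if ((i' : I), j) = (i0, j) then (1:ℤ) else 0) = 1 := by
          simp [Prod.ext_iff]
        rw [this]
        simp [hy'def, Function.update]
      · have : ∑ i, (if ((i : I), j) = (i0, j0) then (1:ℤ) else 0) = 0 := by
          simp [Prod.ext_iff, hj]
        rw [this]
        simp [hy'def, Function.update, hj]

/-- generic swap lemma -/

lemma swap_row {n n' t : ℕ} {φ : Fin n → Fin t} {φ' : Fin n' → Fin t}
    (W : tfpIdx n n' t φ φ' → ℤ) (g : Fin n → ℤ) :
    ∑ i, g i * (∑ p : tfpIdx n n' t φ φ', if p.1.1 = i then W p else 0)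
      = ∑ p : tfpIdx n n' t φ φ', g p.1.1 * W p := by
  simp_rw [Finset.mul_sum, mul_ite, mul_zero]
  rw [Finset.sum_comm]
  refine Finset.sum_congr rfl fun p _ => ?_
  simpa using Finset.sum_ite_eq Finset.univ p.1.1 (fun i => g i * W p)

lemma swap_col {n n' t : ℕ} {φ : Fin n → Fin t} {φ' : Fin n' → Fin t}
    (W : tfpIdx n n' t φ φ' → ℤ) (g : Fin n' → ℤ) :
    ∑ j, g j * (∑ p : tfpIdx n n' t φ φ', if p.1.2 = j then W p else 0)
      = ∑ p : tfpIdx n n' t φ φ', g p.1.2 * W p := by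
  simp_rw [Finset.mul_sum, mul_ite, mul_zero]
  rw [Finset.sum_comm]
  refine Finset.sum_congr rfl fun p _ => ?_
  simpa using Finset.sum_ite_eq Finset.univ p.1.2 (fun j => g j * W p)

lemma exists_match {n n' t : ℕ} (φ : Fin n → Fin t) (φ' : Fin n' → Fin t)
    (v : Fin n → ℤ) (v' : Fin n' → ℤ) (hv : 0 ≤ v) (hv' : 0 ≤ v')
    (hm : marg φ v = marg φ' v') :
    ∃ W : tfpIdx n n' t φ φ' → ℤ, 0 ≤ W ∧
      (∀ i, ∑ p : tfpIdx n n' t φ φ', (if p.1.1 = i then W p else 0) = v i) ∧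
      (∀ j, ∑ p : tfpIdx n n' t φ φ', (if p.1.2 = j then W p else 0) = v' j) := by
  have H : ∀ a : Fin t, ∃ w : Fin n × Fin n' → ℤ, 0 ≤ w ∧
      (∀ i, ∑ j, w (i, j) = if φ i = a then v i else 0) ∧
      (∀ j, ∑ i, w (i, j) = if φ' j = a then v' j else 0) := by
    intro a
    have hnn : 0 ≤ marg φ v a := Finset.sum_nonneg fun i _ => by
      by_cases hc : φ i = a
      · simpa [hc] using hv i
      · simp [hc]
    have hxnn : (0 : Fin n → ℤ) ≤ fun i => if φ i = a then v i else 0 := fun i => by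
      by_cases hc : φ i = a
      · simpa [hc] using hv i
      · simp [hc]
    have hynn : (0 : Fin n' → ℤ) ≤ fun j => if φ' j = a then v' j else 0 := fun j => by
      by_cases hc : φ' j = a
      · simpa [hc] using hv' j
      · simp [hc]
    refine transport_aux (marg φ v a).toNat _ _ hxnn hynn ?_ ?_
    · rw [Int.toNat_of_nonneg hnn]; rfl
    · rw [Int.toNat_of_nonneg hnn, hm]; rfl
  choose F hF0 hFr hFc using H
  have hvan1 : ∀ a q, φ q.1 ≠ a → F a q = 0 := by
    intro a q hne
    have h := hFr a q.1
    rw [if_neg hne] at h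
    have h0 := (Finset.sum_eq_zero_iff_of_nonneg (fun j _ => hF0 a (q.1, j))).mp h
    exact h0 q.2 (Finset.mem_univ _)
  have hvan2 : ∀ a q, φ' q.2 ≠ a → F a q = 0 := by
    intro a q hne
    have h := hFc a q.2
    rw [if_neg hne] at h
    have h0 := (Finset.sum_eq_zero_iff_of_nonneg (fun i _ => hF0 a (i, q.2))).mp h
    exact h0 q.1 (Finset.mem_univ _)
  refine ⟨fun p => F (φ p.1.1) p.1, fun p => hF0 _ _, fun i => ?_, fun j => ?_⟩
  · have hsub := Finset.sum_subtype (p := fun q : Fin n × Fin n' => φ q.1 = φ' q.2) (F := Subtype.fintype _)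
      (Finset.univ.filter fun q : Fin n × Fin n' => φ q.1 = φ' q.2)
      (by simp) (fun q : Fin n × Fin n' => if q.1 = i then F (φ q.1) q else 0)
    rw [← hsub, Finset.sum_filter]
    have hpt : ∀ q : Fin n × Fin n',
        (if φ q.1 = φ' q.2 then (if q.1 = i then F (φ q.1) q else 0) else 0)
          = (if q.1 = i then F (φ i) q else 0) := by
      intro q
      by_cases h1 : q.1 = i
      · subst h1
        by_cases h2 : φ q.1 = φ' q.2
        · simp [h2]
        · rw [if_neg h2, if_pos rfl, hvan2 (φ q.1) q (fun hh => h2 hh.symm)]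
      · simp [h1]
    rw [Finset.sum_congr rfl fun q _ => hpt q, Fintype.sum_prod_type]
    have : ∀ a : Fin n, (∑ b, if a = i then F (φ i) (a, b) else 0)
        = if a = i then (∑ b, F (φ i) (a, b)) else 0 := by
      intro a; split <;> simp
    rw [Finset.sum_congr rfl fun a _ => this a,
      Finset.sum_ite_eq' Finset.univ i (fun a => ∑ b, F (φ i) (a, b))]
    simp [hFr (φ i) i]
  · have hcongr : ∑ p : tfpIdx n n' t φ φ', (if p.1.2 = j then F (φ p.1.1) p.1 else 0)
        = ∑ p : tfpIdx n n' t φ φ', (if p.1.2 = j then F (φ' p.1.2) p.1 else 0) :=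
      Finset.sum_congr rfl fun p _ => by rw [p.2]
    rw [hcongr]
    have hsub := Finset.sum_subtype (p := fun q : Fin n × Fin n' => φ q.1 = φ' q.2) (F := Subtype.fintype _)
      (Finset.univ.filter fun q : Fin n × Fin n' => φ q.1 = φ' q.2)
      (by simp) (fun q : Fin n × Fin n' => if q.2 = j then F (φ' q.2) q else 0)
    rw [← hsub, Finset.sum_filter]
    have hpt : ∀ q : Fin n × Fin n',
        (if φ q.1 = φ' q.2 then (if q.2 = j then F (φ' q.2) q else 0) else 0)
          = (if q.2 = j then F (φ' j) q else 0) := by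
      intro q
      by_cases h1 : q.2 = j
      · subst h1
        by_cases h2 : φ q.1 = φ' q.2
        · simp [h2]
        · rw [if_neg h2, if_pos rfl, hvan1 (φ' q.2) q h2]
      · simp [h1]
    rw [Finset.sum_congr rfl fun q _ => hpt q, Fintype.sum_prod_type]
    have : ∀ a : Fin n, (∑ b, if b = j then F (φ' j) (a, b) else 0) = F (φ' j) (a, j) := by
      intro a
      exact Finset.sum_ite_eq' Finset.univ j (fun b => F (φ' j) (a, b)) ▸ by simp
    rw [Finset.sum_congr rfl fun a _ => this a]
    simp [hFc (φ' j) j]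

lemma swap_row_ind {n n' t : ℕ} {φ : Fin n → Fin t} {φ' : Fin n' → Fin t}
    (W : tfpIdx n n' t φ φ' → ℤ) (a : Fin t) :
    ∑ i, (if φ i = a then (∑ p : tfpIdx n n' t φ φ', if p.1.1 = i then W p else 0) else 0)
      = ∑ p : tfpIdx n n' t φ φ', (if φ p.1.1 = a then W p else 0) := by
  have h1 : ∀ i, (if φ i = a then (∑ p : tfpIdx n n' t φ φ', if p.1.1 = i then W p else 0) else 0)
      = (if φ i = a then (1:ℤ) else 0) * (∑ p : tfpIdx n n' t φ φ', if p.1.1 = i then W p else 0) :=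
    fun i => by split <;> simp
  rw [Finset.sum_congr rfl fun i _ => h1 i, swap_row]
  exact Finset.sum_congr rfl fun p _ => by split <;> simp

lemma swap_col_ind {n n' t : ℕ} {φ : Fin n → Fin t} {φ' : Fin n' → Fin t}
    (W : tfpIdx n n' t φ φ' → ℤ) (a : Fin t) :
    ∑ j, (if φ' j = a then (∑ p : tfpIdx n n' t φ φ', if p.1.2 = j then W p else 0) else 0)
      = ∑ p : tfpIdx n n' t φ φ', (if φ' p.1.2 = a then W p else 0) := by
  have h1 : ∀ j, (if φ' j = a then (∑ p : tfpIdx n n' t φ φ', if p.1.2 = j then W p else 0) else 0)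
      = (if φ' j = a then (1:ℤ) else 0) * (∑ p : tfpIdx n n' t φ φ', if p.1.2 = j then W p else 0) :=
    fun j => by split <;> simp
  rw [Finset.sum_congr rfl fun j _ => h1 j, swap_col]
  exact Finset.sum_congr rfl fun p _ => by split <;> simp


/-- Lemma 4.4: `ξ(F(ℬ×_𝒜ℬ', (b,b'))) = φ(F(ℬ,b)) ∩ φ'(F(ℬ',b'))`. -/
theorem stmt_12 (s t h h' n n' : ℕ)
    (A : Matrix (Fin s) (Fin t) ℤ)
    (B : Matrix (Fin h) (Fin n) ℤ) (B' : Matrix (Fin h') (Fin n') ℤ)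
    (φ : Fin n → Fin t) (φ' : Fin n' → Fin t)
    (hφ : Function.Surjective φ) (hφ' : Function.Surjective φ')
    (hgrB : ∀ v, B.mulVec v = 0 → A.mulVec (marg φ v) = 0)
    (hgrB' : ∀ v, B'.mulVec v = 0 → A.mulVec (marg φ' v) = 0)
    (b : Fin h → ℤ) (b' : Fin h' → ℤ)
    (hb : ∃ w : Fin n → ℤ, 0 ≤ w ∧ B.mulVec w = b)
    (hb' : ∃ w : Fin n' → ℤ, 0 ≤ w ∧ B'.mulVec w = b') :
    xiMap φ φ' '' {w | 0 ≤ w ∧ (tfpMat B B' φ φ').mulVec w = Sum.elim b b'} =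
      (marg φ '' {w | 0 ≤ w ∧ B.mulVec w = b}) ∩
      (marg φ' '' {w | 0 ≤ w ∧ B'.mulVec w = b'}) := by
  ext u
  constructor
  · rintro ⟨w, ⟨hw0, hwM⟩, rfl⟩
    set v : Fin n → ℤ := fun i => ∑ p : tfpIdx n n' t φ φ', if p.1.1 = i then w p else 0 with hv
    set v' : Fin n' → ℤ := fun j => ∑ p : tfpIdx n n' t φ φ', if p.1.2 = j then w p else 0 with hv'
    have hv0 : 0 ≤ v := fun i => Finset.sum_nonneg fun p _ => by
      dsimp only; split <;> [exact hw0 p; exact le_rfl]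
    have hv0' : 0 ≤ v' := fun j => Finset.sum_nonneg fun p _ => by
      dsimp only; split <;> [exact hw0 p; exact le_rfl]
    have hBv : B.mulVec v = b := by
      funext k
      have h1 := congrFun hwM (Sum.inl k)
      simp only [Matrix.mulVec, dotProduct, tfpMat, Matrix.of_apply, Sum.elim_inl] at h1 ⊢
      rw [← h1, hv]
      exact swap_row w (B k)
    have hBv' : B'.mulVec v' = b' := by
      funext k
      have h1 := congrFun hwM (Sum.inr k)
      simp only [Matrix.mulVec, dotProduct, tfpMat, Matrix.of_apply, Sum.elim_inr] at h1 ⊢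
      rw [← h1, hv']
      exact swap_col w (B' k)
    have hmv : marg φ v = xiMap φ φ' w := by
      funext a
      rw [marg, hv]
      exact swap_row_ind w a
    have hmv' : marg φ' v' = xiMap φ φ' w := by
      funext a
      rw [marg, hv']
      rw [show (∑ j, if φ' j = a then v' j else 0)
          = ∑ p : tfpIdx n n' t φ φ', (if φ' p.1.2 = a then w p else 0) from swap_col_ind w a]
      exact Finset.sum_congr rfl fun p _ => by rw [← p.2]
    exact ⟨⟨v, ⟨hv0, hBv⟩, hmv⟩, ⟨v', ⟨hv0', hBv'⟩, hmv'⟩⟩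
  · rintro ⟨⟨v, ⟨hv0, hBv⟩, rfl⟩, ⟨v', ⟨hv0', hBv'⟩, hm⟩⟩
    obtain ⟨W, hW0, hWr, hWc⟩ := exists_match φ φ' v v' hv0 hv0' hm.symm
    refine ⟨W, ⟨hW0, ?_⟩, ?_⟩
    · funext k
      cases k with
      | inl k =>
        have : Sum.elim b b' (Sum.inl k) = b k := rfl
        rw [this, ← hBv]
        simp only [Matrix.mulVec, dotProduct, tfpMat, Matrix.of_apply, Sum.elim_inl]
        rw [← swap_row W (B k)]
        exact Finset.sum_congr rfl fun i _ => by rw [hWr i]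
      | inr k =>
        have : Sum.elim b b' (Sum.inr k) = b' k := rfl
        rw [this, ← hBv']
        simp only [Matrix.mulVec, dotProduct, tfpMat, Matrix.of_apply, Sum.elim_inr]
        rw [← swap_col W (B' k)]
        exact Finset.sum_congr rfl fun j _ => by rw [hWc j]
    · funext a
      rw [xiMap, marg, ← swap_row_ind W a]
      exact Finset.sum_congr rfl fun i _ => by rw [hWr i]

end Stmt12
end

section
/- Let ℬ, ℬ' be 𝒜-graded integer matrices via φ, φ', with toric fiber product ℬ ×_𝒜 ℬ' and maps ψ, ψ', ξ. Then ker_ℤ(ξ) ∩ ker_ℤ(ℬ ×_𝒜 ℬ') = ker_ℤ(ℬ^φ ×_Ã (ℬ')^{φ'}), where Ã is the t×t identity matrix and ℬ^φ, (ℬ')^{φ'} are the augmented matrices whose columns append φ(eᵢ), φ'(eⱼ) to the respective columns. -/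
namespace Stmt13

/-- The marginalization map `ℤⁿ → ℤᵗ` induced by an index map `φ : [n] → [t]`,
sending `eᵢ ↦ e_{φ(i)}`. -/
def marg {n t : ℕ} (φ : Fin n → Fin t) (v : Fin n → ℤ) : Fin t → ℤ :=
  fun a => ∑ i, if φ i = a then v i else 0

/-- The index set of the toric fiber product: pairs `(i,j)` with `φ(i) = φ'(j)`. -/
abbrev tfpIdx (n n' t : ℕ) (φ : Fin n → Fin t) (φ' : Fin n' → Fin t) :=
  {p : Fin n × Fin n' // φ p.1 = φ' p.2}

/-- The toric fiber product matrix `ℬ ×_𝒜 ℬ'`, with column `(i,j)` equal to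
`(bᵢ ; b'ⱼ)`. -/
def tfpMat {h h' n n' t : ℕ} (B : Matrix (Fin h) (Fin n) ℤ)
    (B' : Matrix (Fin h') (Fin n') ℤ) (φ : Fin n → Fin t) (φ' : Fin n' → Fin t) :
    Matrix (Fin h ⊕ Fin h') (tfpIdx n n' t φ φ') ℤ :=
  Matrix.of fun k p => Sum.elim (fun a => B a p.1.1) (fun a => B' a p.1.2) k

/-- The map `ξ` sending `e_{i,j}` to `e_{φ(i)} = e_{φ'(j)}`. -/
def xiMap {n n' t : ℕ} (φ : Fin n → Fin t) (φ' : Fin n' → Fin t)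
    (w : tfpIdx n n' t φ φ' → ℤ) : Fin t → ℤ :=
  fun a => ∑ p : tfpIdx n n' t φ φ', if φ p.1.1 = a then w p else 0

/-- The associated codimension-zero toric fiber product matrix
`ℬ^φ ×_Ã (ℬ')^{φ'}`, with column `(i,j)` equal to `(bᵢ ; e_{φ(i)} ; b'ⱼ ; e_{φ'(j)})`. -/
def tfpAug {h h' n n' t : ℕ} (B : Matrix (Fin h) (Fin n) ℤ)
    (B' : Matrix (Fin h') (Fin n') ℤ) (φ : Fin n → Fin t) (φ' : Fin n' → Fin t) :
    Matrix ((Fin h ⊕ Fin t) ⊕ (Fin h' ⊕ Fin t)) (tfpIdx n n' t φ φ') ℤ :=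
  Matrix.of fun k p =>
    Sum.elim
      (Sum.elim (fun a => B a p.1.1) (fun a => if φ p.1.1 = a then 1 else 0))
      (Sum.elim (fun a => B' a p.1.2) (fun a => if φ' p.1.2 = a then 1 else 0)) k

/-- Lemma 4.3:
`ker_ℤ(ξ) ∩ ker_ℤ(ℬ ×_𝒜 ℬ') = ker_ℤ(ℬ^φ ×_Ã (ℬ')^{φ'})`. -/
theorem stmt_13 (s t h h' n n' : ℕ)
    (A : Matrix (Fin s) (Fin t) ℤ)
    (B : Matrix (Fin h) (Fin n) ℤ) (B' : Matrix (Fin h') (Fin n') ℤ)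
    (φ : Fin n → Fin t) (φ' : Fin n' → Fin t)
    (hφ : Function.Surjective φ) (hφ' : Function.Surjective φ')
    (hgrB : ∀ v, B.mulVec v = 0 → A.mulVec (marg φ v) = 0)
    (hgrB' : ∀ v, B'.mulVec v = 0 → A.mulVec (marg φ' v) = 0) :
    {w : tfpIdx n n' t φ φ' → ℤ |
        xiMap φ φ' w = 0 ∧ (tfpMat B B' φ φ').mulVec w = 0} =
      {w | (tfpAug B B' φ φ').mulVec w = 0} := by
  have key : ∀ (w : tfpIdx n n' t φ φ' → ℤ) (k : (Fin h ⊕ Fin t) ⊕ (Fin h' ⊕ Fin t)),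
      (tfpAug B B' φ φ').mulVec w k =
        Sum.elim (Sum.elim (fun a => (tfpMat B B' φ φ').mulVec w (Sum.inl a))
            (fun a => xiMap φ φ' w a))
          (Sum.elim (fun a => (tfpMat B B' φ φ').mulVec w (Sum.inr a))
            (fun a => xiMap φ φ' w a)) k := by
    intro w k
    rcases k with (a | a) | (a | a) <;>
      simp only [tfpAug, tfpMat, xiMap, Matrix.mulVec, dotProduct,
        Matrix.of_apply, Sum.elim_inl, Sum.elim_inr, ite_mul, one_mul, zero_mul]
    exact Finset.sum_congr rfl fun p _ => by rw [p.2]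
  ext w
  simp only [Set.mem_setOf_eq]
  constructor
  · rintro ⟨h1, h2⟩
    funext k
    rw [key]
    rcases k with (a | a) | (a | a)
    · simpa using congrFun h2 (Sum.inl a)
    · simpa using congrFun h1 a
    · simpa using congrFun h2 (Sum.inr a)
    · simpa using congrFun h1 a
  · intro hk
    constructor
    · funext a
      have := congrFun hk (Sum.inl (Sum.inr a))
      rw [key] at this; simpa using this
    · funext k
      rcases k with a | a
      · have := congrFun hk (Sum.inl (Sum.inl a))
        rw [key] at this; simpa using this
      · have := congrFun hk (Sum.inr (Sum.inl a))
        rw [key] at this; simpa using this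

end Stmt13
end

section
/- Let ℳ ⊆ ker_ℤ ℬ and ℳ' ⊆ ker_ℤ ℬ' be (ℱ(ℬ), φ, ⪰_ℬ)- and (ℱ(ℬ'), φ', ⪰_{ℬ'})-lifts, respectively, of a ⪰_𝒜-Gröbner basis 𝒢 of ξ(ℱ(ℬ ×_𝒜 ℬ')). Then Glues(ℳ, ℳ') is a (ℱ(ℬ ×_𝒜 ℬ'), ξ, ⪰_×)-lift of 𝒢, where ⪰_× is any compatible additive preorder. -/
namespace Stmt15

/-- The marginalization map `ℤⁿ → ℤᵗ` induced by an index map `φ : [n] → [t]`,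
sending `eᵢ ↦ e_{φ(i)}`. -/
def marg {n t : ℕ} (φ : Fin n → Fin t) (v : Fin n → ℤ) : Fin t → ℤ :=
  fun a => ∑ i, if φ i = a then v i else 0

/-- The index set of the toric fiber product: pairs `(i,j)` with `φ(i) = φ'(j)`. -/
abbrev tfpIdx (n n' t : ℕ) (φ : Fin n → Fin t) (φ' : Fin n' → Fin t) :=
  {p : Fin n × Fin n' // φ p.1 = φ' p.2}

/-- The toric fiber product matrix `ℬ ×_𝒜 ℬ'`, with column `(i,j)` equal to
`(bᵢ ; b'ⱼ)`. -/
def tfpMat {h h' n n' t : ℕ} (B : Matrix (Fin h) (Fin n) ℤ)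
    (B' : Matrix (Fin h') (Fin n') ℤ) (φ : Fin n → Fin t) (φ' : Fin n' → Fin t) :
    Matrix (Fin h ⊕ Fin h') (tfpIdx n n' t φ φ') ℤ :=
  Matrix.of fun k p => Sum.elim (fun a => B a p.1.1) (fun a => B' a p.1.2) k

/-- The map `ξ` sending `e_{i,j}` to `e_{φ(i)} = e_{φ'(j)}`. -/
def xiMap {n n' t : ℕ} (φ : Fin n → Fin t) (φ' : Fin n' → Fin t)
    (w : tfpIdx n n' t φ φ' → ℤ) : Fin t → ℤ :=
  fun a => ∑ p : tfpIdx n n' t φ φ', if φ p.1.1 = a then w p else 0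

/-- The projection `ψ` sending `e_{i,j}` to `eᵢ`. -/
def psiMap {n n' t : ℕ} (φ : Fin n → Fin t) (φ' : Fin n' → Fin t)
    (w : tfpIdx n n' t φ φ' → ℤ) : Fin n → ℤ :=
  fun i => ∑ p : tfpIdx n n' t φ φ', if p.1.1 = i then w p else 0

/-- The projection `ψ'` sending `e_{i,j}` to `eⱼ`. -/
def psiMap' {n n' t : ℕ} (φ : Fin n → Fin t) (φ' : Fin n' → Fin t)
    (w : tfpIdx n n' t φ φ' → ℤ) : Fin n' → ℤ :=
  fun j => ∑ p : tfpIdx n n' t φ φ', if p.1.2 = j then w p else 0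

/-- Positive part of an integer vector. -/
def pos {ι : Type*} (v : ι → ℤ) : ι → ℤ := fun i => max (v i) 0

/-- Negative part of an integer vector. -/
def neg {ι : Type*} (v : ι → ℤ) : ι → ℤ := fun i => max (-v i) 0

/-- `mt` is a glue of `m` and `m'`:  `mt = P - N` where the nonnegative vectors `P`
and `N` project under `ψ, ψ'` onto the extensions `m̄⁺ = m⁺ + a`, `m̄⁻ = m⁻ + a`,
`m̄'⁺ = m'⁺ + b`, `m̄'⁻ = m'⁻ + b`, with `φ(a) = v⁺`, `φ'(b) = v⁻` for
`v = φ'(m'⁺) - φ(m⁺)`. -/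
def isGlue {n n' t : ℕ} (φ : Fin n → Fin t) (φ' : Fin n' → Fin t)
    (m : Fin n → ℤ) (m' : Fin n' → ℤ) (mt : tfpIdx n n' t φ φ' → ℤ) : Prop :=
  ∃ P N : tfpIdx n n' t φ φ' → ℤ, 0 ≤ P ∧ 0 ≤ N ∧ mt = P - N ∧
    ∃ (a : Fin n → ℤ) (b : Fin n' → ℤ), 0 ≤ a ∧ 0 ≤ b ∧
      marg φ a = pos (marg φ' (pos m') - marg φ (pos m)) ∧
      marg φ' b = neg (marg φ' (pos m') - marg φ (pos m)) ∧
      psiMap φ φ' P = pos m + a ∧ psiMap φ φ' N = neg m + a ∧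
      psiMap' φ φ' P = pos m' + b ∧ psiMap' φ φ' N = neg m' + b

def isAddPreorder {ι : Type*} (R : (ι → ℤ) → (ι → ℤ) → Prop) : Prop :=
  (∀ u, R u u) ∧ (∀ u v w, R u v → R v w → R u w) ∧
  (∀ u v, R u v ∨ R v u) ∧ (∀ u v w, R u v → R (u + w) (v + w))

def dstep {ι : Type*} (F M : Set (ι → ℤ)) (R : (ι → ℤ) → (ι → ℤ) → Prop)
    (u v : ι → ℤ) : Prop :=
  u ∈ F ∧ v ∈ F ∧ (v - u ∈ M ∨ u - v ∈ M) ∧ R u v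

def mutReach {ι : Type*} (F M : Set (ι → ℤ)) (R : (ι → ℤ) → (ι → ℤ) → Prop)
    (u v : ι → ℤ) : Prop :=
  Relation.ReflTransGen (dstep F M R) u v ∧ Relation.ReflTransGen (dstep F M R) v u

def isSink {ι : Type*} (F M : Set (ι → ℤ)) (R : (ι → ℤ) → (ι → ℤ) → Prop)
    (u : ι → ℤ) : Prop :=
  u ∈ F ∧ ∀ v, Relation.ReflTransGen (dstep F M R) u v →
    Relation.ReflTransGen (dstep F M R) v u

def weakConn {ι : Type*} (F M : Set (ι → ℤ)) (R : (ι → ℤ) → (ι → ℤ) → Prop) : Prop :=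
  ∀ u ∈ F, ∀ v ∈ F,
    Relation.ReflTransGen (fun a b => dstep F M R a b ∨ dstep F M R b a) u v

def isGroebner {ι : Type*} (Fam : Set (Set (ι → ℤ))) (M : Set (ι → ℤ))
    (R : (ι → ℤ) → (ι → ℤ) → Prop) : Prop :=
  ∀ F ∈ Fam, weakConn F M R ∧
    (∀ u v, isSink F M R u → isSink F M R v → mutReach F M R u v) ∧
    (∀ u, isSink F M R u → ∀ v ∈ F, R v u)

/-- `M` is an `(ℱ, φ, ⪰)`-lift of `G` (Definition 3.2), for an additive map `φm`. -/
def isLiftF {ι κ : Type*} (Fam : Set (Set (ι → ℤ))) (φm : (ι → ℤ) → (κ → ℤ))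
    (R : (ι → ℤ) → (ι → ℤ) → Prop) (G : Set (κ → ℤ)) (M : Set (ι → ℤ)) : Prop :=
  ∀ F ∈ Fam, ∀ v ∈ F, ∀ v' ∈ F, R v v' → φm (v - v') ∈ G →
    ∃ m₀ m : ι → ℤ, φm m₀ = 0 ∧ m ∈ M ∧ v + m₀ ∈ F ∧ v + m₀ + m ∈ F ∧
      R v (v + m₀) ∧ R (v + m₀) (v + m₀ + m) ∧ φm (v + m₀ + m) = φm v'

/-- The family `ℱ(M)` of all fibers of an integer matrix `M`. -/
def matFam {ι κ : Type*} [Fintype ι] (Mat : Matrix κ ι ℤ) : Set (Set (ι → ℤ)) :=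
  {F | ∃ b : κ → ℤ, F = {w | 0 ≤ w ∧ Mat.mulVec w = b}}

section Helpers

set_option linter.unusedSectionVars false
set_option linter.unusedVariables false
variable {ι ι' κ : Type*} [Fintype ι] [Fintype ι'] [DecidableEq ι] [DecidableEq ι'] [DecidableEq κ]

/-- generic marginalization -/
def gm (f : ι → κ) (v : ι → ℤ) : κ → ℤ := fun a => ∑ i, if f i = a then v i else 0

lemma gm_add (f : ι → κ) (x y : ι → ℤ) : gm f (x + y) = gm f x + gm f y := by
  funext a
  simp only [gm, Pi.add_apply]
  rw [← Finset.sum_add_distrib]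
  apply Finset.sum_congr rfl
  intro i _
  split <;> simp

lemma gm_neg (f : ι → κ) (x : ι → ℤ) : gm f (-x) = - gm f x := by
  funext a
  simp only [gm, Pi.neg_apply, ← Finset.sum_neg_distrib]
  apply Finset.sum_congr rfl
  intro i _
  split <;> simp

lemma gm_sub (f : ι → κ) (x y : ι → ℤ) : gm f (x - y) = gm f x - gm f y := by
  rw [sub_eq_add_neg, gm_add, gm_neg, sub_eq_add_neg]

lemma gm_zero (f : ι → κ) : gm f 0 = 0 := by
  funext a; simp [gm]

lemma gm_mono (f : ι → κ) {x y : ι → ℤ} (h : x ≤ y) : gm f x ≤ gm f y := by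
  intro a
  apply Finset.sum_le_sum
  intro i _
  split
  · exact h i
  · exact le_refl 0

lemma gm_nonneg (f : ι → κ) {x : ι → ℤ} (h : 0 ≤ x) : 0 ≤ gm f x := by
  have := gm_mono f h
  rwa [gm_zero] at this

lemma gm_comp {κ' : Type*} [DecidableEq κ'] [Fintype κ] (g : κ → κ') (f : ι → κ) (v : ι → ℤ) :
    gm g (gm f v) = gm (fun i => g (f i)) v := by
  funext b
  simp only [gm]
  have step : ∀ a : κ, (if g a = b then ∑ i, if f i = a then v i else 0 else 0)
      = ∑ i, if g a = b then (if f i = a then v i else 0) else 0 := by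
    intro a; split <;> simp
  rw [Finset.sum_congr rfl (fun a _ => step a), Finset.sum_comm]
  apply Finset.sum_congr rfl
  intro i _
  rw [Finset.sum_eq_single (f i)]
  · simp
  · intro a _ ha
    split
    · exact if_neg (fun h => ha h.symm)
    · rfl
  · simp

lemma le_gm (f : ι → κ) {x : ι → ℤ} (h : 0 ≤ x) (i : ι) : x i ≤ gm f x (f i) := by
  have : x i = ∑ j, if j = i then x j else 0 := by simp
  rw [this]
  apply Finset.sum_le_sum
  intro j _
  by_cases hj : j = i
  · subst hj; simp
  · simp only [hj, if_false]
    split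
    · exact h j
    · exact le_refl 0

lemma gm_single (f : ι → κ) (i₀ : ι) :
    gm f (fun i => if i = i₀ then (1:ℤ) else 0) = fun a => if f i₀ = a then 1 else 0 := by
  funext a
  simp only [gm]
  rw [Finset.sum_eq_single i₀]
  · simp
  · intro i _ hi; simp [hi]
  · simp

lemma exists_pos_of_gm_pos (f : ι → κ) {x : ι → ℤ} (hx : 0 ≤ x) {a : κ}
    (h : 0 < gm f x a) : ∃ i, f i = a ∧ 0 < x i := by
  by_contra hc
  push_neg at hc
  have : gm f x a ≤ 0 := by
    apply Finset.sum_nonpos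
    intro i _
    split
    · next hfi => exact hc i hfi
    · exact le_refl 0
  omega

lemma sum_gm [Fintype κ] (f : ι → κ) (x : ι → ℤ) : ∑ a, gm f x a = ∑ i, x i := by
  simp only [gm]
  rw [Finset.sum_comm]
  apply Finset.sum_congr rfl
  intro i _
  rw [Finset.sum_eq_single (f i)]
  · simp
  · intro a _ ha
    exact if_neg (fun h => ha h.symm)
  · simp

/-- delta (indicator) vector -/
def dl {σ : Type*} [DecidableEq σ] (i₀ : σ) : σ → ℤ := fun i => if i = i₀ then 1 else 0

lemma dl_nonneg {σ : Type*} [DecidableEq σ] (i₀ : σ) : 0 ≤ dl i₀ := by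
  intro i; simp only [dl, Pi.zero_apply]; split <;> omega

lemma dl_eq {σ : Type*} [DecidableEq σ] (i₀ : σ) :
    (fun i => if i₀ = i then (1:ℤ) else 0) = dl i₀ := by
  funext i; simp [dl, eq_comm]

lemma gm_dl (f : ι → κ) (i₀ : ι) : gm f (dl i₀) = dl (f i₀) := by
  rw [show dl i₀ = fun i => if i = i₀ then (1:ℤ) else 0 from rfl, gm_single, dl_eq]

lemma sum_dl (i₀ : ι) : ∑ i, dl i₀ i = 1 := by
  simp [dl]

lemma reduce_aux [Fintype κ] (f : ι → κ) :
    ∀ (k : ℕ) (z : ι → ℤ) (c : κ → ℤ), 0 ≤ z → 0 ≤ c → c ≤ gm f z → (∑ a, c a).toNat = k →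
      ∃ a : ι → ℤ, 0 ≤ a ∧ a ≤ z ∧ gm f a = c := by
  intro k
  induction k with
  | zero =>
    intro z c hz hc hcz hsum
    have hc0 : c = 0 := by
      have hs : ∑ a, c a = 0 := by
        have := Finset.sum_nonneg (fun a (_ : a ∈ Finset.univ) => hc a)
        omega
      have := (Finset.sum_eq_zero_iff_of_nonneg (fun a (_ : a ∈ Finset.univ) => hc a)).mp hs
      funext a; exact this a (Finset.mem_univ a)
    exact ⟨0, le_refl 0, hz, by rw [gm_zero, hc0]⟩
  | succ k ih =>
    intro z c hz hc hcz hsum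
    have hpos : 0 < ∑ a, c a := by
      by_contra h; push_neg at h; omega
    obtain ⟨α, -, hα⟩ := Finset.exists_lt_of_sum_lt (f := fun _ : κ => (0:ℤ)) (g := c) (by simpa using hpos)
    have hα : 0 < c α := hα
    have hzα : 0 < gm f z α := lt_of_lt_of_le hα (hcz α)
    obtain ⟨i, hfi, hzi⟩ := exists_pos_of_gm_pos f hz hzα
    have h1 : 0 ≤ z - dl i := by
      intro j; simp only [Pi.sub_apply, dl, Pi.zero_apply]
      split
      · next hj => subst hj; omega
      · have := hz j; simp at this; omega
    have h2 : 0 ≤ c - dl α := by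
      intro a; simp only [Pi.sub_apply, dl, Pi.zero_apply]
      split
      · next ha => subst ha; omega
      · have := hc a; simp at this; omega
    have h3 : c - dl α ≤ gm f (z - dl i) := by
      rw [gm_sub, gm_dl, hfi]
      exact fun a => sub_le_sub (hcz a) (le_refl _)
    have h4 : (∑ a, (c - dl α) a).toNat = k := by
      simp only [Pi.sub_apply, Finset.sum_sub_distrib, sum_dl]
      omega
    obtain ⟨a, ha0, haz, hga⟩ := ih (z - dl i) (c - dl α) h1 h2 h3 h4
    refine ⟨a + dl i, ?_, ?_, ?_⟩
    · exact fun j => add_nonneg (ha0 j) (dl_nonneg i j)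
    · intro j
      have := haz j
      simp only [Pi.add_apply, Pi.sub_apply] at this ⊢
      omega
    · rw [gm_add, hga, gm_dl, hfi, sub_add_cancel]

lemma transport_aux (f : ι → κ) (g : ι' → κ) :
    ∀ (k : ℕ) (x : ι → ℤ) (y : ι' → ℤ), 0 ≤ x → 0 ≤ y → gm f x = gm g y →
      (∑ i, x i).toNat = k →
      ∃ W : {p : ι × ι' // f p.1 = g p.2} → ℤ, 0 ≤ W ∧
        gm (fun p => p.1.1) W = x ∧ gm (fun p => p.1.2) W = y := by
  intro k
  induction k with
  | zero =>
    intro x y hx hy hxy hsum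
    have hx0 : x = 0 := by
      have hs : ∑ i, x i = 0 := by
        have := Finset.sum_nonneg (fun i (_ : i ∈ Finset.univ) => hx i)
        omega
      have := (Finset.sum_eq_zero_iff_of_nonneg (fun i (_ : i ∈ Finset.univ) => hx i)).mp hs
      funext i; exact this i (Finset.mem_univ i)
    have hy0 : y = 0 := by
      funext j
      have h1 : y j ≤ gm g y (g j) := le_gm g hy j
      rw [← hxy, hx0, gm_zero] at h1
      have := hy j; simp at this h1 ⊢; omega
    exact ⟨0, le_refl 0, by rw [gm_zero, hx0], by rw [gm_zero, hy0]⟩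
  | succ k ih =>
    intro x y hx hy hxy hsum
    have hpos : 0 < ∑ i, x i := by
      by_contra h; push_neg at h; omega
    obtain ⟨i, -, hxi⟩ := Finset.exists_lt_of_sum_lt (f := fun _ : ι => (0:ℤ)) (g := x) (by simpa using hpos)
    have hxi : 0 < x i := hxi
    have hgα : 0 < gm g y (f i) := by
      rw [← hxy]; exact lt_of_lt_of_le hxi (le_gm f hx i)
    obtain ⟨j, hgj, hyj⟩ := exists_pos_of_gm_pos g hy hgα
    have h1 : 0 ≤ x - dl i := by
      intro j'; simp only [Pi.sub_apply, dl, Pi.zero_apply]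
      split
      · next hj => subst hj; omega
      · have := hx j'; simp at this; omega
    have h2 : 0 ≤ y - dl j := by
      intro j'; simp only [Pi.sub_apply, dl, Pi.zero_apply]
      split
      · next hj => subst hj; omega
      · have := hy j'; simp at this; omega
    have h3 : gm f (x - dl i) = gm g (y - dl j) := by
      rw [gm_sub, gm_sub, gm_dl, gm_dl, hxy, hgj]
    have h4 : (∑ i', (x - dl i) i').toNat = k := by
      simp only [Pi.sub_apply, Finset.sum_sub_distrib, sum_dl]
      omega
    obtain ⟨W, hW0, hW1, hW2⟩ := ih (x - dl i) (y - dl j) h1 h2 h3 h4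
    refine ⟨W + dl ⟨(i, j), hgj.symm⟩, ?_, ?_, ?_⟩
    · exact fun p => add_nonneg (hW0 p) (dl_nonneg _ p)
    · rw [gm_add, hW1, gm_dl, sub_add_cancel]
    · rw [gm_add, hW2, gm_dl, sub_add_cancel]

end Helpers

section Bridge
set_option linter.unusedSectionVars false
variable {n n' t : ℕ} (φ : Fin n → Fin t) (φ' : Fin n' → Fin t)

lemma marg_gm : marg φ = gm φ := rfl
lemma psi_gm : psiMap φ φ' = gm (fun p : tfpIdx n n' t φ φ' => p.1.1) := rfl
lemma psi'_gm : psiMap' φ φ' = gm (fun p : tfpIdx n n' t φ φ' => p.1.2) := rfl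
lemma xi_gm : xiMap φ φ' = gm (fun p : tfpIdx n n' t φ φ' => φ p.1.1) := rfl

lemma marg_add' (x y : Fin n → ℤ) : marg φ (x + y) = marg φ x + marg φ y := gm_add _ _ _
lemma marg_sub' (x y : Fin n → ℤ) : marg φ (x - y) = marg φ x - marg φ y := gm_sub _ _ _
lemma marg_add'' (x y : Fin n' → ℤ) : marg φ' (x + y) = marg φ' x + marg φ' y := gm_add _ _ _
lemma marg_sub'' (x y : Fin n' → ℤ) : marg φ' (x - y) = marg φ' x - marg φ' y := gm_sub _ _ _
lemma psi_sub (x y : tfpIdx n n' t φ φ' → ℤ) :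
    psiMap φ φ' (x - y) = psiMap φ φ' x - psiMap φ φ' y := gm_sub _ _ _
lemma psi'_sub (x y : tfpIdx n n' t φ φ' → ℤ) :
    psiMap' φ φ' (x - y) = psiMap' φ φ' x - psiMap' φ φ' y := gm_sub _ _ _
lemma psi_add (x y : tfpIdx n n' t φ φ' → ℤ) :
    psiMap φ φ' (x + y) = psiMap φ φ' x + psiMap φ φ' y := gm_add _ _ _
lemma psi'_add (x y : tfpIdx n n' t φ φ' → ℤ) :
    psiMap' φ φ' (x + y) = psiMap' φ φ' x + psiMap' φ φ' y := gm_add _ _ _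
lemma psi_nonneg {x : tfpIdx n n' t φ φ' → ℤ} (h : 0 ≤ x) : 0 ≤ psiMap φ φ' x :=
  gm_nonneg _ h
lemma psi'_nonneg {x : tfpIdx n n' t φ φ' → ℤ} (h : 0 ≤ x) : 0 ≤ psiMap' φ φ' x :=
  gm_nonneg _ h
lemma xi_sub (x y : tfpIdx n n' t φ φ' → ℤ) :
    xiMap φ φ' (x - y) = xiMap φ φ' x - xiMap φ φ' y := gm_sub _ _ _

lemma xi_psi (w : tfpIdx n n' t φ φ' → ℤ) :
    marg φ (psiMap φ φ' w) = xiMap φ φ' w := by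
  rw [marg_gm, psi_gm, xi_gm, gm_comp]

lemma xi_psi' (w : tfpIdx n n' t φ φ' → ℤ) :
    marg φ' (psiMap' φ φ' w) = xiMap φ φ' w := by
  rw [marg_gm, psi'_gm, xi_gm, gm_comp]
  funext a
  apply Finset.sum_congr rfl
  intro p _
  simp only [← p.2]

lemma pos_nonneg {ι : Type*} (v : ι → ℤ) : 0 ≤ pos v := fun i => le_max_right _ _
lemma neg_nonneg {ι : Type*} (v : ι → ℤ) : 0 ≤ neg v := fun i => le_max_right _ _
lemma pos_sub_neg {ι : Type*} (v : ι → ℤ) : pos v - neg v = v := by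
  funext i; simp only [pos, neg, Pi.sub_apply]; omega

variable {h h' : ℕ} (B : Matrix (Fin h) (Fin n) ℤ) (B' : Matrix (Fin h') (Fin n') ℤ)

lemma mulVec_psi (w : tfpIdx n n' t φ φ' → ℤ) (k : Fin h) :
    B.mulVec (psiMap φ φ' w) k = ∑ p : tfpIdx n n' t φ φ', B k p.1.1 * w p := by
  simp only [Matrix.mulVec, dotProduct, psiMap, Finset.mul_sum, mul_ite, mul_zero]
  rw [Finset.sum_comm]
  apply Finset.sum_congr rfl
  intro p _
  rw [Finset.sum_eq_single p.1.1]
  · simp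
  · intro i _ hi
    exact if_neg (fun hh => hi hh.symm)
  · simp

lemma mulVec_psi' (w : tfpIdx n n' t φ φ' → ℤ) (k : Fin h') :
    B'.mulVec (psiMap' φ φ' w) k = ∑ p : tfpIdx n n' t φ φ', B' k p.1.2 * w p := by
  simp only [Matrix.mulVec, dotProduct, psiMap', Finset.mul_sum, mul_ite, mul_zero]
  rw [Finset.sum_comm]
  apply Finset.sum_congr rfl
  intro p _
  rw [Finset.sum_eq_single p.1.2]
  · simp
  · intro i _ hi
    exact if_neg (fun hh => hi hh.symm)
  · simp

lemma mulVec_tfp_inl (w : tfpIdx n n' t φ φ' → ℤ) (k : Fin h) :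
    (tfpMat B B' φ φ').mulVec w (Sum.inl k) = B.mulVec (psiMap φ φ' w) k := by
  rw [mulVec_psi]
  simp [Matrix.mulVec, dotProduct, tfpMat]

lemma mulVec_tfp_inr (w : tfpIdx n n' t φ φ' → ℤ) (k : Fin h') :
    (tfpMat B B' φ φ').mulVec w (Sum.inr k) = B'.mulVec (psiMap' φ φ' w) k := by
  rw [mulVec_psi']
  simp [Matrix.mulVec, dotProduct, tfpMat]

end Bridge

/-- Lemma 4.8: the glues of `φ`- and `φ'`-lifts of a `⪰_𝒜`-Gröbner
basis `𝒢` of `ξ(ℱ(ℬ ×_𝒜 ℬ'))` form a `(ℱ(ℬ×_𝒜ℬ'), ξ, ⪰_×)`-lift of `𝒢`. -/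
theorem stmt_15 (s t h h' n n' : ℕ)
    (A : Matrix (Fin s) (Fin t) ℤ)
    (B : Matrix (Fin h) (Fin n) ℤ) (B' : Matrix (Fin h') (Fin n') ℤ)
    (φ : Fin n → Fin t) (φ' : Fin n' → Fin t)
    (hφ : Function.Surjective φ) (hφ' : Function.Surjective φ')
    (hgrB : ∀ v, B.mulVec v = 0 → A.mulVec (marg φ v) = 0)
    (hgrB' : ∀ v, B'.mulVec v = 0 → A.mulVec (marg φ' v) = 0)
    (RB : (Fin n → ℤ) → (Fin n → ℤ) → Prop)
    (RB' : (Fin n' → ℤ) → (Fin n' → ℤ) → Prop)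
    (RA : (Fin t → ℤ) → (Fin t → ℤ) → Prop)
    (RX : (tfpIdx n n' t φ φ' → ℤ) → (tfpIdx n n' t φ φ' → ℤ) → Prop)
    (haB : isAddPreorder RB) (haB' : isAddPreorder RB')
    (haA : isAddPreorder RA) (haX : isAddPreorder RX)
    (hcB : ∀ F ∈ matFam B, ∀ u ∈ F, ∀ v ∈ F, marg φ u ≠ marg φ v →
      (RA (marg φ u) (marg φ v) ↔ RB u v))
    (hcB' : ∀ F ∈ matFam B', ∀ u ∈ F, ∀ v ∈ F, marg φ' u ≠ marg φ' v →
      (RA (marg φ' u) (marg φ' v) ↔ RB' u v))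
    (hcX : ∀ F ∈ matFam (tfpMat B B' φ φ'), ∀ u ∈ F, ∀ v ∈ F,
      xiMap φ φ' u ≠ xiMap φ φ' v → (RA (xiMap φ φ' u) (xiMap φ φ' v) ↔ RX u v))
    (hXψ : ∀ u₁ u₂ : tfpIdx n n' t φ φ' → ℤ,
      RB (psiMap φ φ' u₁) (psiMap φ φ' u₂) →
      RB' (psiMap' φ φ' u₁) (psiMap' φ φ' u₂) → RX u₁ u₂)
    (G : Set (Fin t → ℤ))
    (hG : isGroebner {S | ∃ F ∈ matFam (tfpMat B B' φ φ'), S = xiMap φ φ' '' F} G RA)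
    (M : Set (Fin n → ℤ)) (hMk : M ⊆ {v | B.mulVec v = 0})
    (hM : isLiftF (matFam B) (marg φ) RB G M)
    (M' : Set (Fin n' → ℤ)) (hMk' : M' ⊆ {v | B'.mulVec v = 0})
    (hM' : isLiftF (matFam B') (marg φ') RB' G M') :
    isLiftF (matFam (tfpMat B B' φ φ')) (xiMap φ φ') RX G
      {mt | ∃ m ∈ M, ∃ m' ∈ M', marg φ m = marg φ' m' ∧ isGlue φ φ' m m' mt} := by
  intro F hF v hv v' hv' hRX hGmem
  obtain ⟨bvec, rfl⟩ := hF
  obtain ⟨hv0, hvb⟩ := hv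
  obtain ⟨hv'0, hv'b⟩ := hv'
  have hFmem : {w | 0 ≤ w ∧ (tfpMat B B' φ φ').mulVec w = bvec} ∈
      matFam (tfpMat B B' φ φ') := ⟨bvec, rfl⟩
  -- the B- and B'-fibers of the projections
  have hFBmem : {w | 0 ≤ w ∧ B.mulVec w = B.mulVec (psiMap φ φ' v)} ∈ matFam B :=
    ⟨_, rfl⟩
  have hFB'mem : {w | 0 ≤ w ∧ B'.mulVec w = B'.mulVec (psiMap' φ φ' v)} ∈ matFam B' :=
    ⟨_, rfl⟩
  have huFB : psiMap φ φ' v ∈ {w | 0 ≤ w ∧ B.mulVec w = B.mulVec (psiMap φ φ' v)} :=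
    ⟨psi_nonneg φ φ' hv0, rfl⟩
  have hyFB' : psiMap' φ φ' v ∈ {w | 0 ≤ w ∧ B'.mulVec w = B'.mulVec (psiMap' φ φ' v)} :=
    ⟨psi'_nonneg φ φ' hv0, rfl⟩
  have hBv' : B.mulVec (psiMap φ φ' v') = B.mulVec (psiMap φ φ' v) := by
    funext k
    rw [← mulVec_tfp_inl φ φ' B B', ← mulVec_tfp_inl φ φ' B B', hvb, hv'b]
  have hB'v' : B'.mulVec (psiMap' φ φ' v') = B'.mulVec (psiMap' φ φ' v) := by
    funext k
    rw [← mulVec_tfp_inr φ φ' B B', ← mulVec_tfp_inr φ φ' B B', hvb, hv'b]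
  -- choose the target point `U'` for the unprimed lift (handles the degenerate case)
  have hU' : ∃ U' ∈ {w | 0 ≤ w ∧ B.mulVec w = B.mulVec (psiMap φ φ' v)},
      RB (psiMap φ φ' v) U' ∧ marg φ (psiMap φ φ' v - U') ∈ G ∧
      marg φ U' = xiMap φ φ' v' := by
    by_cases hxi : xiMap φ φ' v = xiMap φ φ' v'
    · refine ⟨psiMap φ φ' v, huFB, haB.1 _, ?_, by rw [xi_psi, hxi]⟩
      have h0 : marg φ (psiMap φ φ' v - psiMap φ φ' v) = xiMap φ φ' (v - v') := by
        rw [sub_self, marg_gm, gm_zero, xi_sub, hxi, sub_self]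
      rw [h0]; exact hGmem
    · have hRA : RA (xiMap φ φ' v) (xiMap φ φ' v') :=
        (hcX _ hFmem v ⟨hv0, hvb⟩ v' ⟨hv'0, hv'b⟩ hxi).mpr hRX
      have hu'FB : psiMap φ φ' v' ∈
          {w | 0 ≤ w ∧ B.mulVec w = B.mulVec (psiMap φ φ' v)} :=
        ⟨psi_nonneg φ φ' hv'0, hBv'⟩
      have hne : marg φ (psiMap φ φ' v) ≠ marg φ (psiMap φ φ' v') := by
        rw [xi_psi, xi_psi]; exact hxi
      have hRB : RB (psiMap φ φ' v) (psiMap φ φ' v') :=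
        (hcB _ hFBmem _ huFB _ hu'FB hne).mp (by rw [xi_psi, xi_psi]; exact hRA)
      refine ⟨psiMap φ φ' v', hu'FB, hRB, ?_, by rw [xi_psi]⟩
      rw [← psi_sub, xi_psi]; exact hGmem
  have hY' : ∃ Y' ∈ {w | 0 ≤ w ∧ B'.mulVec w = B'.mulVec (psiMap' φ φ' v)},
      RB' (psiMap' φ φ' v) Y' ∧ marg φ' (psiMap' φ φ' v - Y') ∈ G ∧
      marg φ' Y' = xiMap φ φ' v' := by
    by_cases hxi : xiMap φ φ' v = xiMap φ φ' v'
    · refine ⟨psiMap' φ φ' v, hyFB', haB'.1 _, ?_, by rw [xi_psi', hxi]⟩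
      have h0 : marg φ' (psiMap' φ φ' v - psiMap' φ φ' v) = xiMap φ φ' (v - v') := by
        rw [sub_self, marg_gm, gm_zero, xi_sub, hxi, sub_self]
      rw [h0]; exact hGmem
    · have hRA : RA (xiMap φ φ' v) (xiMap φ φ' v') :=
        (hcX _ hFmem v ⟨hv0, hvb⟩ v' ⟨hv'0, hv'b⟩ hxi).mpr hRX
      have hy'FB : psiMap' φ φ' v' ∈
          {w | 0 ≤ w ∧ B'.mulVec w = B'.mulVec (psiMap' φ φ' v)} :=
        ⟨psi'_nonneg φ φ' hv'0, hB'v'⟩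
      have hne : marg φ' (psiMap' φ φ' v) ≠ marg φ' (psiMap' φ φ' v') := by
        rw [xi_psi', xi_psi']; exact hxi
      have hRB : RB' (psiMap' φ φ' v) (psiMap' φ φ' v') :=
        (hcB' _ hFB'mem _ hyFB' _ hy'FB hne).mp (by rw [xi_psi', xi_psi']; exact hRA)
      refine ⟨psiMap' φ φ' v', hy'FB, hRB, ?_, by rw [xi_psi']⟩
      rw [← psi'_sub, xi_psi']; exact hGmem
  obtain ⟨U', hU'FB, hRBuU', hGB, hmargU'⟩ := hU'
  obtain ⟨Y', hY'FB, hRB'yY', hGB', hmargY'⟩ := hY'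
  obtain ⟨m₀, m, hm₀, hmM, hin1, hin2, hRB1, hRB2, hmargeq⟩ :=
    hM _ hFBmem _ huFB U' hU'FB hRBuU' hGB
  obtain ⟨m'₀, m', hm'₀, hm'M, hin1', hin2', hRB1', hRB2', hmargeq'⟩ :=
    hM' _ hFB'mem _ hyFB' Y' hY'FB hRB'yY' hGB'
  -- basic facts from the lift data
  have hBm : B.mulVec m = 0 := hMk hmM
  have hB'm' : B'.mulVec m' = 0 := hMk' hm'M
  have margub : marg φ (psiMap φ φ' v + m₀) = xiMap φ φ' v := by
    rw [marg_add', hm₀, add_zero, xi_psi]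
  have margyb : marg φ' (psiMap' φ φ' v + m'₀) = xiMap φ φ' v := by
    rw [marg_add'', hm'₀, add_zero, xi_psi']
  have margubm : marg φ (psiMap φ φ' v + m₀ + m) = xiMap φ φ' v' := by
    rw [hmargeq, hmargU']
  have margybm : marg φ' (psiMap' φ φ' v + m'₀ + m') = xiMap φ φ' v' := by
    rw [hmargeq', hmargY']
  have margm : marg φ m = xiMap φ φ' v' - xiMap φ φ' v := by
    rw [← margubm, marg_add', margub]; ring
  have margm' : marg φ' m' = xiMap φ φ' v' - xiMap φ φ' v := by
    rw [← margybm, marg_add'', margyb]; ring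
  have hkey : marg φ (pos m) - marg φ (neg m)
      = marg φ' (pos m') - marg φ' (neg m') := by
    rw [← marg_sub', ← marg_sub'', pos_sub_neg, pos_sub_neg, margm, margm']
  -- pointwise bounds
  have hnegm_le : neg m ≤ psiMap φ φ' v + m₀ := by
    intro i
    have h1 : 0 ≤ (psiMap φ φ' v + m₀) i := hin1.1 i
    have h2 : 0 ≤ (psiMap φ φ' v + m₀ + m) i := hin2.1 i
    simp only [neg, Pi.add_apply, Pi.zero_apply] at h1 h2 ⊢
    omega
  have hnegm'_le : neg m' ≤ psiMap' φ φ' v + m'₀ := by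
    intro i
    have h1 : 0 ≤ (psiMap' φ φ' v + m'₀) i := hin1'.1 i
    have h2 : 0 ≤ (psiMap' φ φ' v + m'₀ + m') i := hin2'.1 i
    simp only [neg, Pi.add_apply, Pi.zero_apply] at h1 h2 ⊢
    omega
  have hSNm : marg φ (neg m) ≤ marg φ (psiMap φ φ' v + m₀) := gm_mono φ hnegm_le
  have hSNm' : marg φ' (neg m') ≤ marg φ' (psiMap' φ φ' v + m'₀) := gm_mono φ' hnegm'_le
  -- feasibility for the excess vectors a and b
  have hz0 : (0 : Fin n → ℤ) ≤ psiMap φ φ' v + m₀ - neg m := sub_nonneg.mpr hnegm_le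
  have hz0' : (0 : Fin n' → ℤ) ≤ psiMap' φ φ' v + m'₀ - neg m' := sub_nonneg.mpr hnegm'_le
  have hafeas : pos (marg φ' (pos m') - marg φ (pos m))
      ≤ marg φ (psiMap φ φ' v + m₀ - neg m) := by
    intro α
    have e1 := congrFun hkey α
    have e2 := congrFun margub α
    have e3 : marg φ (neg m) α ≤ marg φ (psiMap φ φ' v + m₀) α := hSNm α
    have e4 : marg φ' (neg m') α ≤ marg φ' (psiMap' φ φ' v + m'₀) α := hSNm' α
    have e5 := congrFun margyb α
    have e6 := congrFun (marg_sub' φ (psiMap φ φ' v + m₀) (neg m)) α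
    simp only [pos, Pi.sub_apply] at e1 e2 e3 e4 e5 e6 ⊢
    omega
  have hbfeas : neg (marg φ' (pos m') - marg φ (pos m))
      ≤ marg φ' (psiMap' φ φ' v + m'₀ - neg m') := by
    intro α
    have e1 := congrFun hkey α
    have e2 := congrFun margub α
    have e3 : marg φ (neg m) α ≤ marg φ (psiMap φ φ' v + m₀) α := hSNm α
    have e4 : marg φ' (neg m') α ≤ marg φ' (psiMap' φ φ' v + m'₀) α := hSNm' α
    have e5 := congrFun margyb α
    have e6 := congrFun (marg_sub'' φ' (psiMap' φ φ' v + m'₀) (neg m')) α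
    simp only [pos, neg, Pi.sub_apply] at e1 e2 e3 e4 e5 e6 ⊢
    omega
  obtain ⟨a, ha0, haz, hamarg⟩ := reduce_aux φ
    (∑ α, pos (marg φ' (pos m') - marg φ (pos m)) α).toNat
    (psiMap φ φ' v + m₀ - neg m) (pos (marg φ' (pos m') - marg φ (pos m)))
    hz0 (pos_nonneg _) hafeas rfl
  obtain ⟨b, hb0, hbz, hbmarg⟩ := reduce_aux φ'
    (∑ α, neg (marg φ' (pos m') - marg φ (pos m)) α).toNat
    (psiMap' φ φ' v + m'₀ - neg m') (neg (marg φ' (pos m') - marg φ (pos m)))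
    hz0' (neg_nonneg _) hbfeas rfl
  have hamarg : marg φ a = pos (marg φ' (pos m') - marg φ (pos m)) := hamarg
  have hbmarg : marg φ' b = neg (marg φ' (pos m') - marg φ (pos m)) := hbmarg
  -- the three transportation problems
  have hmargN : marg φ (neg m + a) = marg φ' (neg m' + b) := by
    rw [marg_add', marg_add'', hamarg, hbmarg]
    funext α
    have e1 := congrFun hkey α
    simp only [pos, neg, Pi.add_apply, Pi.sub_apply] at e1 ⊢
    omega
  have hmargP : marg φ (pos m + a) = marg φ' (pos m' + b) := by
    rw [marg_add', marg_add'', hamarg, hbmarg]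
    funext α
    simp only [pos, neg, Pi.add_apply, Pi.sub_apply]
    omega
  have hmargD : marg φ (psiMap φ φ' v + m₀ - (neg m + a))
      = marg φ' (psiMap' φ φ' v + m'₀ - (neg m' + b)) := by
    rw [marg_sub', marg_sub'', margub, margyb, hmargN]
  obtain ⟨N, hN0, hNψ, hNψ'⟩ := transport_aux φ φ' (∑ i, (neg m + a) i).toNat
    (neg m + a) (neg m' + b)
    (add_nonneg (neg_nonneg m) ha0)
    (add_nonneg (neg_nonneg m') hb0) hmargN rfl
  obtain ⟨D, hD0, hDψ, hDψ'⟩ := transport_aux φ φ'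
    (∑ i, (psiMap φ φ' v + m₀ - (neg m + a)) i).toNat
    (psiMap φ φ' v + m₀ - (neg m + a)) (psiMap' φ φ' v + m'₀ - (neg m' + b))
    (sub_nonneg.mpr (le_sub_iff_add_le'.mp haz))
    (sub_nonneg.mpr (le_sub_iff_add_le'.mp hbz))
    hmargD rfl
  obtain ⟨P, hP0, hPψ, hPψ'⟩ := transport_aux φ φ' (∑ i, (pos m + a) i).toNat
    (pos m + a) (pos m' + b)
    (add_nonneg (pos_nonneg m) ha0)
    (add_nonneg (pos_nonneg m') hb0) hmargP rfl
  have hNψ : psiMap φ φ' N = neg m + a := hNψ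
  have hNψ' : psiMap' φ φ' N = neg m' + b := hNψ'
  have hDψ : psiMap φ φ' D = psiMap φ φ' v + m₀ - (neg m + a) := hDψ
  have hDψ' : psiMap' φ φ' D = psiMap' φ φ' v + m'₀ - (neg m' + b) := hDψ'
  have hPψ : psiMap φ φ' P = pos m + a := hPψ
  have hPψ' : psiMap' φ φ' P = pos m' + b := hPψ'
  -- projections of the two new points
  have hψND : psiMap φ φ' (N + D) = psiMap φ φ' v + m₀ := by
    rw [psi_add, hNψ, hDψ]; ring
  have hψ'ND : psiMap' φ φ' (N + D) = psiMap' φ φ' v + m'₀ := by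
    rw [psi'_add, hNψ', hDψ']; ring
  have hψDP : psiMap φ φ' (D + P) = psiMap φ φ' v + m₀ + m := by
    rw [psi_add, hDψ, hPψ]
    funext i
    simp only [pos, neg, Pi.add_apply, Pi.sub_apply]
    omega
  have hψ'DP : psiMap' φ φ' (D + P) = psiMap' φ φ' v + m'₀ + m' := by
    rw [psi'_add, hDψ', hPψ']
    funext i
    simp only [pos, neg, Pi.add_apply, Pi.sub_apply]
    omega
  have hre : v + (N + D - v) = N + D := by ring
  have hre2 : v + (N + D - v) + (P - N) = D + P := by ring
  refine ⟨N + D - v, P - N, ?_, ?_, ?_, ?_, ?_, ?_, ?_⟩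
  · -- ξ(N + D − v) = 0
    rw [xi_sub, ← xi_psi φ φ' (N + D), hψND, margub, sub_self]
  · -- P − N is a glue of (m, m')
    exact ⟨m, hmM, m', hm'M, by rw [margm, margm'], P, N, hP0, hN0, rfl,
      a, b, ha0, hb0, hamarg, hbmarg, hPψ, hNψ, hPψ', hNψ'⟩
  · -- v + (N + D − v) ∈ F
    rw [hre]
    refine ⟨add_nonneg hN0 hD0, ?_⟩
    funext k
    rcases k with k | k
    · rw [mulVec_tfp_inl, hψND, hin1.2, ← mulVec_tfp_inl φ φ' B B', hvb]
    · rw [mulVec_tfp_inr, hψ'ND, hin1'.2, ← mulVec_tfp_inr φ φ' B B', hvb]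
  · -- v + (N + D − v) + (P − N) ∈ F
    rw [hre2]
    refine ⟨add_nonneg hD0 hP0, ?_⟩
    funext k
    rcases k with k | k
    · rw [mulVec_tfp_inl, hψDP, Matrix.mulVec_add, hin1.2, hBm]
      simp only [Pi.add_apply, Pi.zero_apply, add_zero]
      rw [← mulVec_tfp_inl φ φ' B B', hvb]
    · rw [mulVec_tfp_inr, hψ'DP, Matrix.mulVec_add, hin1'.2, hB'm']
      simp only [Pi.add_apply, Pi.zero_apply, add_zero]
      rw [← mulVec_tfp_inr φ φ' B B', hvb]
  · -- RX v (v + (N + D − v))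
    rw [hre]
    exact hXψ v (N + D) (by rw [hψND]; exact hRB1) (by rw [hψ'ND]; exact hRB1')
  · -- RX (v + (N + D − v)) (v + (N + D − v) + (P − N))
    rw [hre2, hre]
    exact hXψ (N + D) (D + P)
      (by rw [hψND, hψDP]; exact hRB2) (by rw [hψ'ND, hψ'DP]; exact hRB2')
  · -- ξ(v + (N + D − v) + (P − N)) = ξ(v')
    rw [hre2, ← xi_psi φ φ' (D + P), hψDP, margubm]

end Stmt15
end
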